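/- arXiv:1610.07576 — 4 statements merged into one kernel-verified Lean document; each statement's English description precedes it below -/
import Mathlib

section
/- Under any scaling satisfying the scaling condition Λ_m(n) = c_n (log n)/n with lim_{n→∞} c_n = c > 1, the probability that the random graph H(n; μ, Θ_n) has no isolated nodes tends to 1 as n → ∞. -/
open MeasureTheory Finset Filter

/-- Edge probability between a class-`i` node and a class-`j` node in the
inhomogeneous random key graph. -/
noncomputable def pEdge (P : ℕ) {r : ℕ} (K : Fin r → ℕ) (i j : Fin r) : ℝ :=
  if K i + K j ≤ P then
    1 - ((P - K i).choose (K j) : ℝ) / (P.choose (K j) : ℝ)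
  else 1

/-- Mean edge probability `Λ_i` of a class-`i` node in the intersection model. -/
noncomputable def LamE {r : ℕ} (μ : Fin r → ℝ) (α : Fin r → Fin r → ℝ)
    (P : ℕ) (K : Fin r → ℕ) (i : Fin r) : ℝ :=
  ∑ j, μ j * (α i j * pEdge P K i j)

/-- Minimum mean edge probability `Λ_m`. -/
noncomputable def LamMin {r : ℕ} (μ : Fin r → ℝ) (α : Fin r → Fin r → ℝ)
    (P : ℕ) (K : Fin r → ℕ) : ℝ :=
  ⨅ i, LamE μ α P K i

/-- The random graph `H(n; μ, Θ)`: random types (distribution `μ`), random key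
rings (uniform `K`-subsets of a `P`-pool, given types), and random channel
indicators (Bernoulli `α_{ij}`, given types), all with the joint distribution
described by the field `joint`. -/
structure HetModel (r n P : ℕ) (K : Fin r → ℕ) (μ : Fin r → ℝ)
    (α : Fin r → Fin r → ℝ) (Ω : Type) [MeasurableSpace Ω]
    (Pr : Measure Ω) : Type where
  typ : Ω → Fin n → Fin r
  keyring : Ω → Fin n → Finset (Fin P)
  chan : Ω → Fin n → Fin n → Bool
  joint : ∀ (t₀ : Fin n → Fin r) (σ₀ : Fin n → Finset (Fin P))
      (b₀ : Fin n → Fin n → Bool),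
      Pr {ω | typ ω = t₀ ∧ keyring ω = σ₀ ∧
              ∀ x y : Fin n, x < y → chan ω x y = b₀ x y}
        = ENNReal.ofReal
            ((∏ x, μ (t₀ x)) *
             (∏ x, if (σ₀ x).card = K (t₀ x)
                   then ((P.choose (K (t₀ x)) : ℝ))⁻¹ else 0) *
             (∏ x : Fin n, ∏ y ∈ univ.filter (fun y => x < y),
                (if b₀ x y then α (t₀ x) (t₀ y) else 1 - α (t₀ x) (t₀ y))))

variable {r n P : ℕ} {K : Fin r → ℕ} {μ : Fin r → ℝ} {α : Fin r → Fin r → ℝ}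
  {Ω : Type} [MeasurableSpace Ω] {Pr : Measure Ω}

/-- Adjacency in `H(n; μ, Θ)`: distinct vertices sharing a key whose channel is on. -/
def HetModel.Adj (M : HetModel r n P K μ α Ω Pr) (ω : Ω) (x y : Fin n) : Prop :=
  x ≠ y ∧ ((M.keyring ω x) ∩ (M.keyring ω y)).Nonempty ∧
    (if x < y then M.chan ω x y else M.chan ω y x) = true

/-- A vertex is isolated if it is adjacent to no other vertex. -/
def HetModel.Isolated (M : HetModel r n P K μ α Ω Pr) (ω : Ω) (x : Fin n) : Prop :=
  ∀ y : Fin n, ¬ M.Adj ω x y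


lemma hetStarSum {A : Type*} [Fintype A] [DecidableEq A] {n : ℕ} (x : Fin n)
    (g : Fin n → A → ℝ) (s : Fin n → A → A → ℝ) :
    ∑ σ : Fin n → A, (∏ y, g y (σ y)) * ∏ y ∈ univ.erase x, s y (σ x) (σ y)
      = ∑ v : A, g x v * ∏ y ∈ univ.erase x, (∑ u : A, g y u * s y v u) := by
  classical
  have hx : x ∈ (univ : Finset (Fin n)) := mem_univ x
  have key : ∀ v : A, g x v * ∏ y ∈ univ.erase x, (∑ u : A, g y u * s y v u)
      = ∑ σ : Fin n → A, ∏ y, (if y = x then (if σ y = v then g x (σ y) else 0)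
          else g y (σ y) * s y v (σ y)) := by
    intro v
    have h1 : ∀ y : Fin n,
        (∑ u : A, (if y = x then (if u = v then g x u else 0) else g y u * s y v u))
        = if y = x then g x v else ∑ u : A, g y u * s y v u := by
      intro y
      by_cases hy : y = x <;> simp [hy]
    calc g x v * ∏ y ∈ univ.erase x, (∑ u : A, g y u * s y v u)
        = ∏ y, (∑ u : A, (if y = x then (if u = v then g x u else 0) else g y u * s y v u)) := by
          rw [← Finset.mul_prod_erase univ _ hx]
          congr 1
          · rw [h1]; simp
          · exact Finset.prod_congr rfl fun y hy => by
              rw [h1]; simp [Finset.ne_of_mem_erase hy]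
      _ = ∑ σ ∈ Fintype.piFinset (fun _ : Fin n => (univ : Finset A)),
            ∏ y, (if y = x then (if σ y = v then g x (σ y) else 0) else g y (σ y) * s y v (σ y)) := by
          rw [Finset.prod_univ_sum]
      _ = ∑ σ : Fin n → A, ∏ y, (if y = x then (if σ y = v then g x (σ y) else 0)
            else g y (σ y) * s y v (σ y)) := by rw [Fintype.piFinset_univ]
  rw [Finset.sum_congr rfl fun v _ => key v, Finset.sum_comm]
  refine Finset.sum_congr rfl fun σ _ => ?_
  have h2 : ∀ v : A, (∏ y, (if y = x then (if σ y = v then g x (σ y) else 0)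
      else g y (σ y) * s y v (σ y)))
      = if σ x = v then g x (σ x) * ∏ y ∈ univ.erase x, (g y (σ y) * s y v (σ y)) else 0 := by
    intro v
    rw [← Finset.mul_prod_erase univ _ hx]
    have he : (∏ y ∈ univ.erase x, (if y = x then (if σ y = v then g x (σ y) else 0)
        else g y (σ y) * s y v (σ y))) = ∏ y ∈ univ.erase x, (g y (σ y) * s y v (σ y)) :=
      Finset.prod_congr rfl fun y hy => by simp [Finset.ne_of_mem_erase hy]
    rw [he]
    simp only [if_pos rfl]
    by_cases h : σ x = v <;> simp [h]
  rw [Finset.sum_congr rfl fun v _ => h2 v, Finset.sum_ite_eq univ (σ x) _]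
  simp only [mem_univ, if_pos]
  rw [Finset.prod_mul_distrib, ← Finset.mul_prod_erase univ (fun y => g y (σ y)) hx]
  ring

lemma card_filter_keycard (P k : ℕ) :
    ((univ : Finset (Finset (Fin P))).filter fun s => s.card = k).card = P.choose k := by
  have h : ((univ : Finset (Finset (Fin P))).filter fun s => s.card = k)
      = (univ : Finset (Fin P)).powersetCard k := by
    ext s; simp [Finset.mem_powersetCard]
  rw [h, Finset.card_powersetCard]; simp

lemma card_filter_keydisj (P k : ℕ) (A : Finset (Fin P)) :
    ((univ : Finset (Finset (Fin P))).filter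
        fun s => s.card = k ∧ ¬(A ∩ s).Nonempty).card = (P - A.card).choose k := by
  have h : ((univ : Finset (Finset (Fin P))).filter
        fun s => s.card = k ∧ ¬(A ∩ s).Nonempty) = Aᶜ.powersetCard k := by
    ext s
    simp only [mem_filter, mem_univ, true_and, Finset.mem_powersetCard,
      Finset.not_nonempty_iff_eq_empty, ← Finset.disjoint_iff_inter_eq_empty]
    rw [← Finset.le_iff_subset, le_compl_iff_disjoint_left]
    tauto
  rw [h, Finset.card_powersetCard, Finset.card_compl]; simp

lemma keysum (P kI kJ : ℕ) (hJ : kI + kJ ≤ P) (a : ℝ) (A : Finset (Fin P))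
    (hA : A.card = kI) :
    ∑ s : Finset (Fin P), (if s.card = kJ then ((P.choose kJ : ℝ))⁻¹ else 0) *
        (if (A ∩ s).Nonempty then 1 - a else 1)
      = 1 - a * (1 - ((P - kI).choose kJ : ℝ) / (P.choose kJ : ℝ)) := by
  classical
  have hC : 0 < P.choose kJ := Nat.choose_pos (le_trans (Nat.le_add_left _ _) hJ)
  have hD : (P - kI).choose kJ ≤ P.choose kJ :=
    Nat.choose_le_choose kJ (Nat.sub_le _ _)
  have h1 : ∑ s : Finset (Fin P), (if s.card = kJ then ((P.choose kJ : ℝ))⁻¹ else 0) *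
        (if (A ∩ s).Nonempty then 1 - a else 1)
      = ∑ s ∈ (univ : Finset (Finset (Fin P))).filter (fun s => s.card = kJ),
          ((P.choose kJ : ℝ))⁻¹ * (if (A ∩ s).Nonempty then 1 - a else 1) := by
    rw [Finset.sum_filter]
    exact Finset.sum_congr rfl fun s _ => by by_cases h : s.card = kJ <;> simp [h]
  rw [h1, ← Finset.mul_sum, Finset.sum_ite, Finset.sum_const, Finset.sum_const]
  have h2 : (((univ : Finset (Finset (Fin P))).filter fun s => s.card = kJ).filter
      fun s => ¬(A ∩ s).Nonempty).card = (P - kI).choose kJ := by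
    rw [Finset.filter_filter, ← hA, ← card_filter_keydisj P kJ A]
  have h3 : (((univ : Finset (Finset (Fin P))).filter fun s => s.card = kJ).filter
      fun s => (A ∩ s).Nonempty).card = P.choose kJ - (P - kI).choose kJ := by
    have := Finset.card_filter_add_card_filter_not
      (s := (univ : Finset (Finset (Fin P))).filter fun s => s.card = kJ)
      (p := fun s => (A ∩ s).Nonempty)
    rw [card_filter_keycard] at this
    omega
  rw [h2, h3]
  have hCne : ((P.choose kJ : ℝ)) ≠ 0 := Nat.cast_ne_zero.2 hC.ne'
  simp only [nsmul_eq_mul]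
  rw [Nat.cast_sub hD]
  field_simp
  ring

/-- Allowed values for channel-indicator entry `(y,z)` in the atom decomposition:
non-upper entries are pinned to `false`; upper entries touching `x` along a
shared-key pair are pinned to `false`; all other upper entries are free. -/
def allowB {n : ℕ} (x : Fin n) (share : Fin n → Prop) [DecidablePred share]
    (y z : Fin n) : Finset Bool :=
  if y < z ∧ ¬((y = x ∧ share z) ∨ (z = x ∧ share y)) then univ else {false}

lemma bsum {n : ℕ} (x : Fin n) (share : Fin n → Prop) [DecidablePred share]
    (q : Fin n → Fin n → ℝ) (hq : ∀ y z, q y z = q z y) :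
    ∑ b ∈ Fintype.piFinset (fun y => Fintype.piFinset (fun z => allowB x share y z)),
        ∏ y, ∏ z ∈ univ.filter (fun z => y < z), (if b y z then q y z else 1 - q y z)
      = ∏ y ∈ univ.erase x, (if share y then 1 - q x y else 1) := by
  classical
  have step1 : ∑ b ∈ Fintype.piFinset (fun y => Fintype.piFinset
        (fun z => allowB x share y z)),
        ∏ y, ∏ z ∈ univ.filter (fun z => y < z), (if b y z then q y z else 1 - q y z)
      = ∏ y, ∑ g ∈ Fintype.piFinset (fun z => allowB x share y z),
          ∏ z ∈ univ.filter (fun z => y < z), (if g z then q y z else 1 - q y z) :=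
    (Finset.prod_univ_sum (fun y => Fintype.piFinset (fun z => allowB x share y z))
      (fun y g => ∏ z ∈ univ.filter (fun z => y < z),
        (if g z then q y z else 1 - q y z))).symm
  have step2 : ∀ y : Fin n, (∑ g ∈ Fintype.piFinset (fun z => allowB x share y z),
        ∏ z ∈ univ.filter (fun z => y < z), (if g z then q y z else 1 - q y z))
      = ∏ z, ∑ v ∈ allowB x share y z, (if y < z then (if v then q y z else 1 - q y z) else 1) := by
    intro y
    rw [Finset.prod_univ_sum (fun z => allowB x share y z)
      (fun z v => (if y < z then (if v then q y z else 1 - q y z) else 1))]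
    exact Finset.sum_congr rfl fun g _ => by rw [Finset.prod_filter]
  have step3 : ∀ y z : Fin n,
      (∑ v ∈ allowB x share y z, (if y < z then (if v then q y z else 1 - q y z) else 1))
      = if y < z ∧ ((y = x ∧ share z) ∨ (z = x ∧ share y)) then 1 - q y z else 1 := by
    intro y z
    unfold allowB
    by_cases hlt : y < z
    · by_cases hcon : (y = x ∧ share z) ∨ (z = x ∧ share y)
      · simp [hlt, hcon]
      · simp [hlt, hcon]
    · simp [hlt]
  rw [step1, Finset.prod_congr rfl fun y _ => (step2 y).trans
    (Finset.prod_congr rfl fun z _ => step3 y z)]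
  -- now evaluate the double product
  set f : Fin n → Fin n → ℝ := fun y z =>
    if y < z ∧ ((y = x ∧ share z) ∨ (z = x ∧ share y)) then 1 - q y z else 1 with hf
  have hx : x ∈ (univ : Finset (Fin n)) := mem_univ x
  rw [← Finset.mul_prod_erase univ (fun y => ∏ z, f y z) hx]
  have hrow_x : (∏ z, f x z) = ∏ z ∈ univ.erase x, (if x < z ∧ share z then 1 - q x z else 1) := by
    rw [← Finset.mul_prod_erase univ (fun z => f x z) hx]
    have h1 : f x x = 1 := by simp [hf]
    rw [h1, one_mul]
    refine Finset.prod_congr rfl fun z hz => ?_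
    have hzx : z ≠ x := Finset.ne_of_mem_erase hz
    have hcond : (x < z ∧ ((x = x ∧ share z) ∨ (z = x ∧ share x))) ↔ (x < z ∧ share z) := by
      constructor
      · rintro ⟨h1', h2'⟩
        rcases h2' with ⟨_, hs⟩ | ⟨hzx', _⟩
        · exact ⟨h1', hs⟩
        · exact absurd hzx' hzx
      · rintro ⟨h1', h2'⟩
        exact ⟨h1', Or.inl ⟨rfl, h2'⟩⟩
    exact if_congr hcond rfl rfl
  have hrow_y : ∀ y ∈ univ.erase x, (∏ z, f y z)
      = if y < x ∧ share y then 1 - q y x else 1 := by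
    intro y hy
    have hyx : y ≠ x := Finset.ne_of_mem_erase hy
    rw [Finset.prod_eq_single x (fun z _ hzx => by
      show (if y < z ∧ ((y = x ∧ share z) ∨ (z = x ∧ share y)) then 1 - q y z else 1) = 1
      rw [if_neg]
      rintro ⟨h1', h2'⟩
      rcases h2' with ⟨hyx', _⟩ | ⟨hzx', _⟩
      · exact hyx hyx'
      · exact hzx hzx') (fun hx' => absurd hx hx')]
    have hcond : (y < x ∧ ((y = x ∧ share x) ∨ (x = x ∧ share y))) ↔ (y < x ∧ share y) := by
      constructor
      · rintro ⟨h1', h2'⟩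
        rcases h2' with ⟨hyx', _⟩ | ⟨_, hs⟩
        · exact absurd hyx' hyx
        · exact ⟨h1', hs⟩
      · rintro ⟨h1', h2'⟩
        exact ⟨h1', Or.inr ⟨rfl, h2'⟩⟩
    exact if_congr hcond rfl rfl
  rw [hrow_x, Finset.prod_congr rfl hrow_y, ← Finset.prod_mul_distrib]
  refine Finset.prod_congr rfl fun y hy => ?_
  have hyx : y ≠ x := Finset.ne_of_mem_erase hy
  rcases lt_or_gt_of_ne hyx with hlt | hgt
  · by_cases hs : share y
    · simp [hlt, hs, not_lt_of_gt hlt, hq y x]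
    · simp [hs]
  · by_cases hs : share y
    · simp [hgt, hs, not_lt_of_gt hgt]
    · simp [hs]

lemma atomsum {n P r : ℕ} (K : Fin r → ℕ) (μ : Fin r → ℝ) (α : Fin r → Fin r → ℝ)
    (hKsum : ∀ i j, K i + K j ≤ P) (hKP : ∀ i, K i ≤ P)
    (hαs : ∀ i j, α i j = α j i) (x : Fin n) :
    ∑ t : Fin n → Fin r, ∑ σ : Fin n → Finset (Fin P),
      ∑ b ∈ Fintype.piFinset (fun y => Fintype.piFinset
          (fun z => allowB x (fun w => (σ x ∩ σ w).Nonempty) y z)),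
        ((∏ y, μ (t y)) *
         (∏ y, if (σ y).card = K (t y) then ((P.choose (K (t y)) : ℝ))⁻¹ else 0) *
         (∏ y, ∏ z ∈ univ.filter (fun z => y < z),
            (if b y z then α (t y) (t z) else 1 - α (t y) (t z))))
      = ∑ i, μ i * ∏ y ∈ univ.erase x, (∑ j, μ j * (1 - α i j * pEdge P K i j)) := by
  classical
  have hb : ∀ (t : Fin n → Fin r) (σ : Fin n → Finset (Fin P)),
      (∑ b ∈ Fintype.piFinset (fun y => Fintype.piFinset
          (fun z => allowB x (fun w => (σ x ∩ σ w).Nonempty) y z)),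
        ((∏ y, μ (t y)) *
         (∏ y, if (σ y).card = K (t y) then ((P.choose (K (t y)) : ℝ))⁻¹ else 0) *
         (∏ y, ∏ z ∈ univ.filter (fun z => y < z),
            (if b y z then α (t y) (t z) else 1 - α (t y) (t z)))))
      = (∏ y, μ (t y)) *
        ((∏ y, if (σ y).card = K (t y) then ((P.choose (K (t y)) : ℝ))⁻¹ else 0) *
         ∏ y ∈ univ.erase x,
           (if (σ x ∩ σ y).Nonempty then 1 - α (t x) (t y) else 1)) := by
    intro t σ
    simp only [mul_assoc]
    rw [← Finset.mul_sum, ← Finset.mul_sum]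
    rw [bsum x (fun w => (σ x ∩ σ w).Nonempty) (fun y z => α (t y) (t z))
      (fun y z => hαs (t y) (t z))]
  simp only [hb]
  have hσ : ∀ t : Fin n → Fin r,
      (∑ σ : Fin n → Finset (Fin P),
        (∏ y, if (σ y).card = K (t y) then ((P.choose (K (t y)) : ℝ))⁻¹ else 0) *
         ∏ y ∈ univ.erase x,
           (if (σ x ∩ σ y).Nonempty then 1 - α (t x) (t y) else 1))
      = ∏ y ∈ univ.erase x, (1 - α (t x) (t y) * pEdge P K (t x) (t y)) := by
    intro t
    have hss := hetStarSum (A := Finset (Fin P)) x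
      (fun y u => if u.card = K (t y) then ((P.choose (K (t y)) : ℝ))⁻¹ else 0)
      (fun y v u => if (v ∩ u).Nonempty then 1 - α (t x) (t y) else 1)
    rw [hss]
    have per_v : ∀ v : Finset (Fin P),
        ((if v.card = K (t x) then ((P.choose (K (t x)) : ℝ))⁻¹ else 0) *
          ∏ y ∈ univ.erase x, (∑ u : Finset (Fin P),
            (if u.card = K (t y) then ((P.choose (K (t y)) : ℝ))⁻¹ else 0) *
            (if (v ∩ u).Nonempty then 1 - α (t x) (t y) else 1)))
        = if v.card = K (t x) then ((P.choose (K (t x)) : ℝ))⁻¹ *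
            ∏ y ∈ univ.erase x, (1 - α (t x) (t y) * pEdge P K (t x) (t y)) else 0 := by
      intro v
      by_cases hv : v.card = K (t x)
      · rw [if_pos hv, if_pos hv]
        congr 1
        refine Finset.prod_congr rfl fun y _ => ?_
        rw [keysum P (K (t x)) (K (t y)) (hKsum _ _) (α (t x) (t y)) v hv]
        rw [pEdge, if_pos (hKsum _ _)]
      · rw [if_neg hv, if_neg hv, zero_mul]
    rw [Finset.sum_congr rfl fun v _ => per_v v, ← Finset.sum_filter,
      Finset.sum_const, card_filter_keycard, nsmul_eq_mul, ← mul_assoc]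
    rw [mul_inv_cancel₀ (Nat.cast_ne_zero.2 (Nat.choose_pos (hKP _)).ne'), one_mul]
  simp only [← Finset.mul_sum]
  simp only [hσ]
  have hss2 := hetStarSum (A := Fin r) x (fun _ i => μ i)
    (fun _ i j => 1 - α i j * pEdge P K i j)
  rw [hss2]

/-- The set of channel-indicator matrices making `x` isolated (given key rings `σ`),
with non-upper entries pinned to `false`. -/
def BadB {n P : ℕ} (x : Fin n) (σ : Fin n → Finset (Fin P)) :
    Finset (Fin n → Fin n → Bool) :=
  Fintype.piFinset (fun y => Fintype.piFinset
    (fun z => allowB x (fun w => (σ x ∩ σ w).Nonempty) y z))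

lemma atomsum' {n P r : ℕ} (K : Fin r → ℕ) (μ : Fin r → ℝ) (α : Fin r → Fin r → ℝ)
    (hKsum : ∀ i j, K i + K j ≤ P) (hKP : ∀ i, K i ≤ P)
    (hαs : ∀ i j, α i j = α j i) (x : Fin n) :
    ∑ t : Fin n → Fin r, ∑ σ : Fin n → Finset (Fin P),
      ∑ b ∈ BadB x σ,
        ((∏ y, μ (t y)) *
         (∏ y, if (σ y).card = K (t y) then ((P.choose (K (t y)) : ℝ))⁻¹ else 0) *
         (∏ y, ∏ z ∈ univ.filter (fun z => y < z),
            (if b y z then α (t y) (t z) else 1 - α (t y) (t z))))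
      = ∑ i, μ i * ∏ y ∈ univ.erase x, (∑ j, μ j * (1 - α i j * pEdge P K i j)) := by
  unfold BadB
  exact atomsum K μ α hKsum hKP hαs x

lemma pEdge_mem {P : ℕ} {r : ℕ} (K : Fin r → ℕ) (hKP : ∀ i, K i ≤ P) (i j : Fin r) :
    0 ≤ pEdge P K i j ∧ pEdge P K i j ≤ 1 := by
  unfold pEdge
  by_cases h : K i + K j ≤ P
  · rw [if_pos h]
    have hC : 0 < (P.choose (K j) : ℝ) :=
      Nat.cast_pos.2 (Nat.choose_pos (hKP j))
    have hD : ((P - K i).choose (K j) : ℝ) ≤ (P.choose (K j) : ℝ) :=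
      Nat.cast_le.2 (Nat.choose_le_choose _ (Nat.sub_le _ _))
    have hD0 : (0:ℝ) ≤ ((P - K i).choose (K j) : ℝ) := Nat.cast_nonneg _
    constructor
    · have : ((P - K i).choose (K j) : ℝ) / (P.choose (K j) : ℝ) ≤ 1 :=
        (div_le_one hC).2 hD
      linarith
    · have : 0 ≤ ((P - K i).choose (K j) : ℝ) / (P.choose (K j) : ℝ) :=
        div_nonneg hD0 hC.le
      linarith
  · rw [if_neg h]; norm_num

lemma rhs_le {n P : ℕ} {r : ℕ} (hr : 0 < r) (K : Fin r → ℕ) (μ : Fin r → ℝ)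
    (α : Fin r → Fin r → ℝ) (hKP : ∀ i, K i ≤ P)
    (hμ0 : ∀ i, 0 ≤ μ i) (hμsum : ∑ i, μ i = 1)
    (hα0 : ∀ i j, 0 ≤ α i j) (hα1 : ∀ i j, α i j ≤ 1) (x : Fin n) :
    ∑ i, μ i * ∏ y ∈ univ.erase x, (∑ j, μ j * (1 - α i j * pEdge P K i j))
      ≤ (1 - LamMin μ α P K) ^ (n - 1) := by
  classical
  have : Nonempty (Fin r) := Fin.pos_iff_nonempty.mp hr
  have hp := fun i j => pEdge_mem K hKP i j
  have hprod : ∀ i j, 0 ≤ α i j * pEdge P K i j ∧ α i j * pEdge P K i j ≤ 1 := fun i j =>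
    ⟨mul_nonneg (hα0 i j) (hp i j).1,
     mul_le_one₀ (hα1 i j) (hp i j).1 (hp i j).2⟩
  have hLamE0 : ∀ i, 0 ≤ LamE μ α P K i := fun i =>
    Finset.sum_nonneg fun j _ => mul_nonneg (hμ0 j) (hprod i j).1
  have hLamE1 : ∀ i, LamE μ α P K i ≤ 1 := by
    intro i
    calc LamE μ α P K i ≤ ∑ j, μ j * 1 :=
          Finset.sum_le_sum fun j _ => mul_le_mul_of_nonneg_left (hprod i j).2 (hμ0 j)
      _ = 1 := by simp [hμsum]
  have hmin_le : ∀ i, LamMin μ α P K ≤ LamE μ α P K i := fun i =>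
    ciInf_le (Set.Finite.bddBelow (Set.finite_range _)) i
  have hsum1 : ∀ i, (∑ j, μ j * (1 - α i j * pEdge P K i j)) = 1 - LamE μ α P K i := by
    intro i
    simp only [mul_one_sub, LamE, Finset.sum_sub_distrib, hμsum, mul_assoc]
  have hcard : (univ.erase x).card = n - 1 := by
    rw [Finset.card_erase_of_mem (mem_univ x), Finset.card_univ, Fintype.card_fin]
  calc ∑ i, μ i * ∏ y ∈ univ.erase x, (∑ j, μ j * (1 - α i j * pEdge P K i j))
      = ∑ i, μ i * (1 - LamE μ α P K i) ^ (n - 1) := by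
        refine Finset.sum_congr rfl fun i _ => ?_
        rw [Finset.prod_congr rfl fun y _ => hsum1 i, Finset.prod_const, hcard]
    _ ≤ ∑ i, μ i * (1 - LamMin μ α P K) ^ (n - 1) := by
        refine Finset.sum_le_sum fun i _ => ?_
        refine mul_le_mul_of_nonneg_left ?_ (hμ0 i)
        exact pow_le_pow_left₀ (by linarith [hLamE1 i]) (by linarith [hmin_le i]) _
    _ = (1 - LamMin μ α P K) ^ (n - 1) := by rw [← Finset.sum_mul, hμsum, one_mul]

lemma bound_tendsto (c : ℝ) (hc : 1 < c) (cn : ℕ → ℝ) (hcn : Tendsto cn atTop (nhds c))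
    (Λ : ℕ → ℝ) (hΛ1 : ∀ᶠ n : ℕ in atTop, Λ n ≤ 1)
    (hscal : ∀ᶠ n : ℕ in atTop, Λ n = cn n * Real.log n / n) :
    Tendsto (fun n : ℕ => (n : ℝ) * (1 - Λ n) ^ (n - 1)) atTop (nhds 0) := by
  have hfrac : Tendsto (fun n : ℕ => ((n : ℝ) - 1) / (n : ℝ)) atTop (nhds 1) := by
    have h0 : Tendsto (fun n : ℕ => 1 - 1 / (n : ℝ)) atTop (nhds 1) := by
      simpa using tendsto_const_nhds.sub (tendsto_one_div_atTop_nhds_zero_nat (𝕜 := ℝ))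
    refine h0.congr' ?_
    filter_upwards [eventually_ge_atTop 1] with n hn
    have : (n : ℝ) ≠ 0 := Nat.cast_ne_zero.2 (by omega)
    field_simp
  have hA : Tendsto (fun n : ℕ => 1 - cn n * (((n : ℝ) - 1) / (n : ℝ))) atTop
      (nhds (1 - c)) := by
    simpa using tendsto_const_nhds.sub (hcn.mul hfrac)
  have hg : Tendsto (fun n : ℕ => Real.log n * (1 - cn n * (((n : ℝ) - 1) / (n : ℝ))))
      atTop atBot :=
    Filter.Tendsto.atTop_mul_neg (by linarith) (Real.tendsto_log_atTop.comp
      tendsto_natCast_atTop_atTop) hA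
  have he : Tendsto (fun n : ℕ =>
      Real.exp (Real.log n * (1 - cn n * (((n : ℝ) - 1) / (n : ℝ))))) atTop (nhds 0) :=
    Real.tendsto_exp_atBot.comp hg
  refine tendsto_of_tendsto_of_tendsto_of_le_of_le' tendsto_const_nhds he ?_ ?_
  · filter_upwards [hΛ1] with n h1
    exact mul_nonneg (Nat.cast_nonneg n) (pow_nonneg (by linarith) _)
  · filter_upwards [hΛ1, hscal, eventually_ge_atTop 1] with n h1 hs hn1
    have hn0 : (0:ℝ) < (n : ℝ) := by exact_mod_cast Nat.pos_of_ne_zero (by omega)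
    have step1 : (1 - Λ n) ^ (n - 1) ≤ Real.exp (-Λ n) ^ (n - 1) :=
      pow_le_pow_left₀ (by linarith) (by linarith [Real.add_one_le_exp (-Λ n)]) _
    have step2 : (n : ℝ) * (1 - Λ n) ^ (n - 1) ≤ (n : ℝ) * Real.exp (-Λ n) ^ (n - 1) :=
      mul_le_mul_of_nonneg_left step1 (Nat.cast_nonneg n)
    refine step2.trans (le_of_eq ?_)
    have hcast : ((n - 1 : ℕ) : ℝ) = (n : ℝ) - 1 := by
      rw [Nat.cast_sub hn1]; norm_num
    have e1 : Real.exp (-Λ n) ^ (n - 1) = Real.exp (((n - 1 : ℕ) : ℝ) * (-Λ n)) :=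
      (Real.exp_nat_mul _ _).symm
    rw [e1, show (n : ℝ) * Real.exp (((n - 1 : ℕ) : ℝ) * -Λ n)
        = Real.exp (Real.log n + ((n - 1 : ℕ) : ℝ) * -Λ n) from by
      rw [Real.exp_add, Real.exp_log hn0]]
    congr 1
    rw [hcast, hs]
    have hne : (n : ℝ) ≠ 0 := hn0.ne'
    field_simp
    ring

lemma weight_nonneg {n P r : ℕ} (K : Fin r → ℕ) (μ : Fin r → ℝ) (α : Fin r → Fin r → ℝ)
    (hμ0 : ∀ i, 0 ≤ μ i) (hα0 : ∀ i j, 0 ≤ α i j) (hα1 : ∀ i j, α i j ≤ 1)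
    (t : Fin n → Fin r) (σ : Fin n → Finset (Fin P)) (b : Fin n → Fin n → Bool) :
    0 ≤ (∏ y, μ (t y)) *
         (∏ y, if (σ y).card = K (t y) then ((P.choose (K (t y)) : ℝ))⁻¹ else 0) *
         (∏ y : Fin n, ∏ z ∈ univ.filter (fun z => y < z),
            (if b y z then α (t y) (t z) else 1 - α (t y) (t z))) := by
  refine mul_nonneg (mul_nonneg ?_ ?_) ?_
  · exact Finset.prod_nonneg fun y _ => hμ0 _
  · refine Finset.prod_nonneg fun y _ => ?_
    by_cases h : (σ y).card = K (t y) <;> simp [h, inv_nonneg]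
  · refine Finset.prod_nonneg fun y _ => Finset.prod_nonneg fun z _ => ?_
    by_cases h : b y z <;> simp [h]
    · exact hα0 _ _
    · linarith [hα1 (t y) (t z)]

lemma bad_bound {r n P : ℕ} {K : Fin r → ℕ} {μ : Fin r → ℝ} {α : Fin r → Fin r → ℝ}
    {Ω : Type} [MeasurableSpace Ω] {Pr : Measure Ω}
    (hr : 0 < r) (hKsum : ∀ i j, K i + K j ≤ P) (hKP : ∀ i, K i ≤ P)
    (hμ0 : ∀ i, 0 ≤ μ i) (hμsum : ∑ i, μ i = 1)
    (hα0 : ∀ i j, 0 ≤ α i j) (hα1 : ∀ i j, α i j ≤ 1)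
    (hαs : ∀ i j, α i j = α j i)
    (M : HetModel r n P K μ α Ω Pr) :
    Pr {ω | ∃ x, M.Isolated ω x}
      ≤ ENNReal.ofReal ((n : ℝ) * (1 - LamMin μ α P K) ^ (n - 1)) := by
  classical
  set A : (Fin n → Fin r) → (Fin n → Finset (Fin P)) → (Fin n → Fin n → Bool) → Set Ω :=
    fun t σ b => {ω | M.typ ω = t ∧ M.keyring ω = σ ∧
      ∀ y z : Fin n, y < z → M.chan ω y z = b y z} with hA
  have cover : {ω | ∃ x, M.Isolated ω x} ⊆
      ⋃ x ∈ (univ : Finset (Fin n)), ⋃ t ∈ (univ : Finset (Fin n → Fin r)),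
        ⋃ σ ∈ (univ : Finset (Fin n → Finset (Fin P))), ⋃ b ∈ BadB x σ, A t σ b := by
    rintro ω ⟨x, hx⟩
    set t : Fin n → Fin r := M.typ ω with ht
    set σ : Fin n → Finset (Fin P) := M.keyring ω with hσ
    set b : Fin n → Fin n → Bool := fun y z =>
      if y < z ∧ ¬((y = x ∧ (σ x ∩ σ z).Nonempty) ∨ (z = x ∧ (σ x ∩ σ y).Nonempty))
      then M.chan ω y z else false with hbdef
    have hmem : b ∈ BadB x σ := by
      rw [BadB, Fintype.mem_piFinset]
      intro y
      rw [Fintype.mem_piFinset]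
      intro z
      unfold allowB
      by_cases h : y < z ∧ ¬((y = x ∧ (σ x ∩ σ z).Nonempty) ∨ (z = x ∧ (σ x ∩ σ y).Nonempty))
      · rw [if_pos h]; exact mem_univ _
      · rw [if_neg h, hbdef]
        simp only [if_neg h, Finset.mem_singleton]
    have hωA : ω ∈ A t σ b := by
      refine ⟨rfl, rfl, fun y z hyz => ?_⟩
      by_cases h : y < z ∧ ¬((y = x ∧ (σ x ∩ σ z).Nonempty) ∨ (z = x ∧ (σ x ∩ σ y).Nonempty))
      · rw [hbdef]; simp only [if_pos h]
      · have hcon : (y = x ∧ (σ x ∩ σ z).Nonempty) ∨ (z = x ∧ (σ x ∩ σ y).Nonempty) := by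
          by_contra hc
          exact h ⟨hyz, hc⟩
        rw [hbdef]
        simp only [if_neg h]
        rcases hcon with ⟨hyx, hsz⟩ | ⟨hzx, hsy⟩
        · subst hyx
          have hadj := hx z
          rw [HetModel.Adj] at hadj
          push_neg at hadj
          have := hadj (ne_of_lt hyz) hsz
          rw [if_pos hyz] at this
          exact Bool.not_eq_true _ ▸ (by simpa using this)
        · subst hzx
          have hadj := hx y
          rw [HetModel.Adj] at hadj
          push_neg at hadj
          have := hadj (ne_of_gt hyz) hsy
          rw [if_neg (not_lt_of_gt hyz)] at this
          exact Bool.not_eq_true _ ▸ (by simpa using this)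
    exact Set.mem_biUnion (mem_univ x) (Set.mem_biUnion (mem_univ t)
      (Set.mem_biUnion (mem_univ σ) (Set.mem_biUnion hmem hωA)))
  have hPrA : ∀ t σ b, Pr (A t σ b) = ENNReal.ofReal
      ((∏ y, μ (t y)) *
       (∏ y, if (σ y).card = K (t y) then ((P.choose (K (t y)) : ℝ))⁻¹ else 0) *
       (∏ y : Fin n, ∏ z ∈ univ.filter (fun z => y < z),
          (if b y z then α (t y) (t z) else 1 - α (t y) (t z)))) := fun t σ b =>
    M.joint t σ b
  calc Pr {ω | ∃ x, M.Isolated ω x}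
      ≤ Pr (⋃ x ∈ (univ : Finset (Fin n)), ⋃ t ∈ (univ : Finset (Fin n → Fin r)),
          ⋃ σ ∈ (univ : Finset (Fin n → Finset (Fin P))), ⋃ b ∈ BadB x σ, A t σ b) :=
        measure_mono cover
    _ ≤ ∑ x ∈ (univ : Finset (Fin n)), Pr (⋃ t ∈ (univ : Finset (Fin n → Fin r)),
          ⋃ σ ∈ (univ : Finset (Fin n → Finset (Fin P))), ⋃ b ∈ BadB x σ, A t σ b) :=
        measure_biUnion_finset_le _ _
    _ ≤ ∑ x ∈ (univ : Finset (Fin n)), ∑ t ∈ (univ : Finset (Fin n → Fin r)),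
          Pr (⋃ σ ∈ (univ : Finset (Fin n → Finset (Fin P))), ⋃ b ∈ BadB x σ, A t σ b) :=
        Finset.sum_le_sum fun x _ => measure_biUnion_finset_le _ _
    _ ≤ ∑ x ∈ (univ : Finset (Fin n)), ∑ t ∈ (univ : Finset (Fin n → Fin r)),
          ∑ σ ∈ (univ : Finset (Fin n → Finset (Fin P))), Pr (⋃ b ∈ BadB x σ, A t σ b) :=
        Finset.sum_le_sum fun x _ => Finset.sum_le_sum fun t _ =>
          measure_biUnion_finset_le _ _
    _ ≤ ∑ x ∈ (univ : Finset (Fin n)), ∑ t ∈ (univ : Finset (Fin n → Fin r)),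
          ∑ σ ∈ (univ : Finset (Fin n → Finset (Fin P))), ∑ b ∈ BadB x σ, Pr (A t σ b) :=
        Finset.sum_le_sum fun x _ => Finset.sum_le_sum fun t _ =>
          Finset.sum_le_sum fun σ _ => measure_biUnion_finset_le _ _
    _ = ∑ x : Fin n, ENNReal.ofReal (∑ t : Fin n → Fin r, ∑ σ : Fin n → Finset (Fin P),
          ∑ b ∈ BadB x σ,
          ((∏ y, μ (t y)) *
           (∏ y, if (σ y).card = K (t y) then ((P.choose (K (t y)) : ℝ))⁻¹ else 0) *
           (∏ y : Fin n, ∏ z ∈ univ.filter (fun z => y < z),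
              (if b y z then α (t y) (t z) else 1 - α (t y) (t z))))) := by
        refine Finset.sum_congr rfl fun x _ => ?_
        have hw0 := weight_nonneg (n := n) (P := P) K μ α hμ0 hα0 hα1
        calc ∑ t ∈ (univ : Finset (Fin n → Fin r)),
              ∑ σ ∈ (univ : Finset (Fin n → Finset (Fin P))),
              ∑ b ∈ BadB x σ, Pr (A t σ b)
            = ∑ t : Fin n → Fin r, ∑ σ : Fin n → Finset (Fin P), ∑ b ∈ BadB x σ,
                ENNReal.ofReal
                ((∏ y, μ (t y)) *
                 (∏ y, if (σ y).card = K (t y) then ((P.choose (K (t y)) : ℝ))⁻¹ else 0) *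
                 (∏ y : Fin n, ∏ z ∈ univ.filter (fun z => y < z),
                    (if b y z then α (t y) (t z) else 1 - α (t y) (t z)))) := by
              refine Finset.sum_congr rfl fun t _ => Finset.sum_congr rfl fun σ _ =>
                Finset.sum_congr rfl fun b _ => hPrA t σ b
          _ = ENNReal.ofReal (∑ t : Fin n → Fin r, ∑ σ : Fin n → Finset (Fin P),
                ∑ b ∈ BadB x σ,
                ((∏ y, μ (t y)) *
                 (∏ y, if (σ y).card = K (t y) then ((P.choose (K (t y)) : ℝ))⁻¹ else 0) *
                 (∏ y : Fin n, ∏ z ∈ univ.filter (fun z => y < z),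
                    (if b y z then α (t y) (t z) else 1 - α (t y) (t z))))) := by
              rw [ENNReal.ofReal_sum_of_nonneg fun t _ => Finset.sum_nonneg fun σ _ =>
                Finset.sum_nonneg fun b _ => hw0 t σ b]
              refine Finset.sum_congr rfl fun t _ => ?_
              rw [ENNReal.ofReal_sum_of_nonneg fun σ _ =>
                Finset.sum_nonneg fun b _ => hw0 t σ b]
              refine Finset.sum_congr rfl fun σ _ => ?_
              rw [ENNReal.ofReal_sum_of_nonneg fun b _ => hw0 t σ b]
    _ ≤ ENNReal.ofReal ((n : ℝ) * (1 - LamMin μ α P K) ^ (n - 1)) := by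
        have hle : ∀ x : Fin n,
            (∑ t : Fin n → Fin r, ∑ σ : Fin n → Finset (Fin P), ∑ b ∈ BadB x σ,
              ((∏ y, μ (t y)) *
               (∏ y, if (σ y).card = K (t y) then ((P.choose (K (t y)) : ℝ))⁻¹ else 0) *
               (∏ y : Fin n, ∏ z ∈ univ.filter (fun z => y < z),
                  (if b y z then α (t y) (t z) else 1 - α (t y) (t z)))))
            ≤ (1 - LamMin μ α P K) ^ (n - 1) := by
          intro x
          rw [atomsum' K μ α hKsum hKP hαs x]
          exact rhs_le hr K μ α hKP hμ0 hμsum hα0 hα1 x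
        calc (∑ x : Fin n, ENNReal.ofReal (∑ t : Fin n → Fin r,
                ∑ σ : Fin n → Finset (Fin P), ∑ b ∈ BadB x σ,
                ((∏ y, μ (t y)) *
                 (∏ y, if (σ y).card = K (t y) then ((P.choose (K (t y)) : ℝ))⁻¹ else 0) *
                 (∏ y : Fin n, ∏ z ∈ univ.filter (fun z => y < z),
                    (if b y z then α (t y) (t z) else 1 - α (t y) (t z))))))
            ≤ ∑ _x : Fin n, ENNReal.ofReal ((1 - LamMin μ α P K) ^ (n - 1)) :=
              Finset.sum_le_sum fun x _ => ENNReal.ofReal_le_ofReal (hle x)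
          _ = (n : ENNReal) * ENNReal.ofReal ((1 - LamMin μ α P K) ^ (n - 1)) := by
              rw [Finset.sum_const, Finset.card_univ, Fintype.card_fin, nsmul_eq_mul]
          _ = ENNReal.ofReal ((n : ℝ) * (1 - LamMin μ α P K) ^ (n - 1)) := by
              rw [ENNReal.ofReal_mul (Nat.cast_nonneg n), ENNReal.ofReal_natCast]

/-- one-law for absence of isolated nodes.
Under any scaling with `Λ_m(n) = c_n log n / n` and `c_n → c > 1`, the
probability that `H(n; μ, Θ_n)` has no isolated nodes tends to `1`. -/
theorem no_isolated_nodes_one_law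
    (hr : 0 < r)
    (hμpos : ∀ i, 0 < μ i) (hμsum : ∑ i, μ i = 1)
    (Pn : ℕ → ℕ) (Kn : ℕ → Fin r → ℕ)
    (hKpos : ∀ n i, 1 ≤ Kn n i)
    (hKmono : ∀ n, Monotone (Kn n))
    (hKP : ∀ n i, 2 * Kn n i ≤ Pn n)
    (αn : ℕ → Fin r → Fin r → ℝ)
    (hα0 : ∀ n i j, 0 < αn n i j) (hα1 : ∀ n i j, αn n i j < 1)
    (hαsymm : ∀ n i j, αn n i j = αn n j i)
    (c : ℝ) (hc : 1 < c) (cn : ℕ → ℝ)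
    (hcn : Tendsto cn atTop (nhds c))
    (hscal : ∀ n, 2 ≤ n →
      LamMin μ (αn n) (Pn n) (Kn n) = cn n * Real.log n / n)
    (Ω : ℕ → Type) [mΩ : ∀ n, MeasurableSpace (Ω n)]
    (Pr : ∀ n, Measure (Ω n)) (hPr : ∀ n, IsProbabilityMeasure (Pr n))
    (M : ∀ n, HetModel r n (Pn n) (Kn n) μ (αn n) (Ω n) (Pr n)) :
    Tendsto (fun n => Pr n {ω | ∀ x : Fin n, ¬ (M n).Isolated ω x})
      atTop (nhds (1 : ENNReal)) := by
  classical
  have hrne : Nonempty (Fin r) := Fin.pos_iff_nonempty.mp hr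
  have hKsum : ∀ n i j, Kn n i + Kn n j ≤ Pn n := by
    intro n i j
    rcases le_total i j with h | h
    · have h1 := hKmono n h; have h2 := hKP n j; omega
    · have h1 := hKmono n h; have h2 := hKP n i; omega
  have hKP' : ∀ n i, Kn n i ≤ Pn n := fun n i => by have := hKP n i; omega
  set Λ : ℕ → ℝ := fun n => LamMin μ (αn n) (Pn n) (Kn n) with hΛ
  have hΛ1 : ∀ n, Λ n ≤ 1 := by
    intro n
    obtain ⟨i⟩ := hrne
    have h1 : Λ n ≤ LamE μ (αn n) (Pn n) (Kn n) i :=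
      ciInf_le (Set.Finite.bddBelow (Set.finite_range _)) i
    refine h1.trans ?_
    have hp := fun a b => pEdge_mem (P := Pn n) (Kn n) (hKP' n) a b
    calc LamE μ (αn n) (Pn n) (Kn n) i
        ≤ ∑ j, μ j * 1 := Finset.sum_le_sum fun j _ =>
          mul_le_mul_of_nonneg_left
            (mul_le_one₀ (hα1 n i j).le (hp i j).1 (hp i j).2) (hμpos j).le
      _ = 1 := by simp [hμsum]
  have hbt : Tendsto (fun n : ℕ => (n : ℝ) * (1 - Λ n) ^ (n - 1)) atTop (nhds 0) :=
    bound_tendsto c hc cn hcn Λ (Filter.Eventually.of_forall hΛ1)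
      (by filter_upwards [eventually_ge_atTop 2] with n hn; exact hscal n hn)
  have hofreal : Tendsto (fun n : ℕ => ENNReal.ofReal ((n : ℝ) * (1 - Λ n) ^ (n - 1)))
      atTop (nhds 0) := by
    rw [← ENNReal.ofReal_zero]
    exact ENNReal.tendsto_ofReal hbt
  have hbad : ∀ n : ℕ, Pr n {ω | ∃ x, (M n).Isolated ω x}
      ≤ ENNReal.ofReal ((n : ℝ) * (1 - Λ n) ^ (n - 1)) := fun n =>
    bad_bound hr (hKsum n) (hKP' n) (fun i => (hμpos i).le) hμsum
      (fun i j => (hα0 n i j).le) (fun i j => (hα1 n i j).le) (hαsymm n) (M n)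
  have hlow : ∀ n : ℕ, 1 - ENNReal.ofReal ((n : ℝ) * (1 - Λ n) ^ (n - 1))
      ≤ Pr n {ω | ∀ x : Fin n, ¬ (M n).Isolated ω x} := by
    intro n
    have hunion : (1 : ENNReal) ≤ Pr n {ω | ∀ x : Fin n, ¬ (M n).Isolated ω x}
        + Pr n {ω | ∃ x, (M n).Isolated ω x} := by
      have hcov : (Set.univ : Set (Ω n)) ⊆ {ω | ∀ x : Fin n, ¬ (M n).Isolated ω x}
          ∪ {ω | ∃ x, (M n).Isolated ω x} := by
        intro ω _
        by_cases h : ∀ x : Fin n, ¬ (M n).Isolated ω x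
        · exact Or.inl h
        · push_neg at h
          exact Or.inr h
      calc (1 : ENNReal) = Pr n Set.univ := (measure_univ (μ := Pr n)).symm
        _ ≤ Pr n ({ω | ∀ x : Fin n, ¬ (M n).Isolated ω x}
              ∪ {ω | ∃ x, (M n).Isolated ω x}) := measure_mono hcov
        _ ≤ Pr n {ω | ∀ x : Fin n, ¬ (M n).Isolated ω x}
              + Pr n {ω | ∃ x, (M n).Isolated ω x} := measure_union_le _ _
    have h2 : (1 : ENNReal) - Pr n {ω | ∃ x, (M n).Isolated ω x}
        ≤ Pr n {ω | ∀ x : Fin n, ¬ (M n).Isolated ω x} :=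
      tsub_le_iff_right.mpr hunion
    exact le_trans (tsub_le_tsub_left (hbad n) 1) h2
  have hup : ∀ n : ℕ, Pr n {ω | ∀ x : Fin n, ¬ (M n).Isolated ω x} ≤ 1 := fun n =>
    prob_le_one
  have hlowt : Tendsto (fun n : ℕ => 1 - ENNReal.ofReal ((n : ℝ) * (1 - Λ n) ^ (n - 1)))
      atTop (nhds 1) := by
    have := ENNReal.Tendsto.sub (tendsto_const_nhds (x := (1 : ENNReal))) hofreal
      (Or.inl ENNReal.one_ne_top)
    simpa using this
  exact tendsto_of_tendsto_of_tendsto_of_le_of_le hlowt tendsto_const_nhds hlow hup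
end

section
/- For any positive integers K_i, K_j, P with K_j ≤ P, and any real scalar a ≥ 1, one has C(P − ⌈a·K_i⌉, K_j)/C(P, K_j) ≤ ( C(P − K_i, K_j)/C(P, K_j) )^a, where the right-hand side uses the real power with exponent a and ⌈·⌉ denotes the ceiling function. -/
open Finset

lemma choose_ratio_eq_prod (P m k : ℕ) (h : m + k ≤ P) :
    ((P - m).choose k : ℝ) / (P.choose k : ℝ) =
      ∏ i ∈ range k, (((P - m - i : ℕ) : ℝ) / ((P - i : ℕ) : ℝ)) := by
  have hkP : k ≤ P := le_trans (Nat.le_add_left _ _) h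
  have hkPm : k ≤ P - m := Nat.le_sub_of_add_le (by omega)
  have h1 : ((P - m).choose k : ℝ) / (P.choose k : ℝ) =
      ((P - m).descFactorial k : ℝ) / (P.descFactorial k : ℝ) := by
    rw [Nat.descFactorial_eq_factorial_mul_choose, Nat.descFactorial_eq_factorial_mul_choose]
    push_cast
    rw [mul_div_mul_left]
    positivity
  rw [h1, Nat.descFactorial_eq_prod_range, Nat.descFactorial_eq_prod_range]
  push_cast
  rw [← prod_div_distrib]

/-- for positive integers `K_i, K_j, P` with `K_j ≤ P` and any
real `a ≥ 1`, `C(P−⌈a·K_i⌉, K_j)/C(P, K_j) ≤ (C(P−K_i, K_j)/C(P, K_j))^a`,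
where the right-hand power is the real power with exponent `a`. -/
theorem choose_ratio_rpow_bound (P Ki Kj : ℕ)
    (hP : 0 < P) (hKi : 0 < Ki) (hKj : 0 < Kj) (hKjP : Kj ≤ P)
    (a : ℝ) (ha : 1 ≤ a) :
    ((P - ⌈a * (Ki : ℝ)⌉₊).choose Kj : ℝ) / (P.choose Kj : ℝ) ≤
      (((P - Ki).choose Kj : ℝ) / (P.choose Kj : ℝ)) ^ a := by
  set c := ⌈a * (Ki : ℝ)⌉₊ with hc
  have haKi : a * (Ki : ℝ) ≤ c := Nat.le_ceil _
  have hKic : Ki ≤ c := by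
    have : (Ki : ℝ) ≤ c := le_trans (le_mul_of_one_le_left (by positivity) ha) haKi
    exact_mod_cast this
  have hrhs0 : 0 ≤ ((P - Ki).choose Kj : ℝ) / (P.choose Kj : ℝ) := by positivity
  by_cases hcase : P - c < Kj
  · rw [Nat.choose_eq_zero_of_lt hcase]
    simpa using Real.rpow_nonneg hrhs0 a
  push_neg at hcase
  have hcP : c < P := by omega
  have hcKj : c + Kj ≤ P := by omega
  have hKiKj : Ki + Kj ≤ P := by omega
  rw [choose_ratio_eq_prod P c Kj hcKj, choose_ratio_eq_prod P Ki Kj hKiKj]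
  have hg0 : ∀ i ∈ range Kj, (0:ℝ) ≤ ((P - Ki - i : ℕ) : ℝ) / ((P - i : ℕ) : ℝ) := by
    intro i _; positivity
  rw [← Real.finset_prod_rpow _ _ hg0]
  refine prod_le_prod (fun i _ => by positivity) ?_
  intro i hi
  rw [mem_range] at hi
  have hiP : i < P := lt_of_lt_of_le hi hKjP
  have hcastx : ((P - i : ℕ) : ℝ) = (P : ℝ) - i := by
    push_cast [Nat.cast_sub hiP.le]; ring
  have hcast1 : ((P - c - i : ℕ) : ℝ) = (P : ℝ) - c - i := by
    have : c + i ≤ P := by omega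
    push_cast [Nat.sub_sub, Nat.cast_sub this]; ring
  have hcast2 : ((P - Ki - i : ℕ) : ℝ) = (P : ℝ) - Ki - i := by
    have : Ki + i ≤ P := by omega
    push_cast [Nat.sub_sub, Nat.cast_sub this]; ring
  rw [hcastx, hcast1, hcast2]
  have hx : (0:ℝ) < (P : ℝ) - i := by
    have : (i : ℝ) < P := by exact_mod_cast hiP
    linarith
  have hne : ((P : ℝ) - i) ≠ 0 := hx.ne'
  have hKix : (Ki : ℝ) ≤ (P : ℝ) - i := by
    have : (Ki : ℝ) + i ≤ P := by exact_mod_cast le_trans (by omega : Ki + i ≤ Ki + Kj) hKiKj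
    linarith
  have hbern : 1 + a * (-((Ki : ℝ) / ((P : ℝ) - i))) ≤
      (1 + (-((Ki : ℝ) / ((P : ℝ) - i)))) ^ a := by
    apply one_add_mul_self_le_rpow_one_add _ ha
    rw [neg_le, neg_neg, div_le_one hx]
    exact hKix
  have heq1 : 1 + (-((Ki : ℝ) / ((P : ℝ) - i))) = ((P : ℝ) - Ki - i) / ((P : ℝ) - i) := by
    field_simp
    ring
  have heq2 : ((P : ℝ) - c - i) / ((P : ℝ) - i) ≤ 1 + a * (-((Ki : ℝ) / ((P : ℝ) - i))) := by
    rw [div_le_iff₀ hx]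
    have hexp : (1 + a * (-((Ki : ℝ) / ((P : ℝ) - i)))) * ((P : ℝ) - i) =
        ((P : ℝ) - i) - a * Ki := by field_simp; ring
    rw [hexp]
    linarith
  calc ((P : ℝ) - c - i) / ((P : ℝ) - i)
      ≤ 1 + a * (-((Ki : ℝ) / ((P : ℝ) - i))) := heq2
    _ ≤ (1 + (-((Ki : ℝ) / ((P : ℝ) - i)))) ^ a := hbern
    _ = (((P : ℝ) - Ki - i) / ((P : ℝ) - i)) ^ a := by rw [heq1]
end

section
/- Under any scaling satisfying the scaling condition Λ_m(n) = c_n (log n)/n with lim_{n→∞} c_n = c > 1, the expected number of isolated vertices in H(n; μ, Θ_n) tends to 0 as n → ∞, i.e., lim_{n→∞} E[I_n] = 0. -/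
open MeasureTheory Finset Filter

variable {r n P : ℕ} {K : Fin r → ℕ} {μ : Fin r → ℝ} {α : Fin r → Fin r → ℝ}
  {Ω : Type} [MeasurableSpace Ω] {Pr : Measure Ω}

noncomputable def IRKkw (P k : ℕ) (s : Finset (Fin P)) : ℝ :=
  if s.card = k then ((P.choose k : ℝ))⁻¹ else 0

lemma IRKkw_nonneg (P k : ℕ) (s : Finset (Fin P)) : 0 ≤ IRKkw P k s := by
  unfold IRKkw; split
  · positivity
  · exact le_refl 0

lemma IRK_filter_card (P k : ℕ) :
    (univ.filter (fun s : Finset (Fin P) => s.card = k)).card = P.choose k := by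
  have h : (univ.filter (fun s : Finset (Fin P) => s.card = k)) = powersetCard k univ := by
    rw [Finset.powersetCard_eq_filter, Finset.powerset_univ]
  rw [h, Finset.card_powersetCard, Finset.card_univ, Fintype.card_fin]

lemma IRK_sum_kw (P k : ℕ) (hk : k ≤ P) : ∑ s : Finset (Fin P), IRKkw P k s = 1 := by
  unfold IRKkw
  rw [← Finset.sum_filter, Finset.sum_const, IRK_filter_card, nsmul_eq_mul]
  exact mul_inv_cancel₀ (by exact_mod_cast (Nat.choose_pos hk).ne')

lemma IRK_sum_kw_disj (P k : ℕ) (s₀ : Finset (Fin P)) :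
    ∑ s : Finset (Fin P), IRKkw P k s * (if s₀ ∩ s = ∅ then (1:ℝ) else 0)
      = ((P - s₀.card).choose k : ℝ) / (P.choose k : ℝ) := by
  have hset : (univ.filter (fun s : Finset (Fin P) => s.card = k ∧ s₀ ∩ s = ∅))
      = powersetCard k s₀ᶜ := by
    ext s
    simp only [Finset.mem_filter, Finset.mem_univ, true_and, Finset.mem_powersetCard]
    constructor
    · rintro ⟨h1, h2⟩
      refine ⟨fun x hx => Finset.mem_compl.2 fun hx0 => ?_, h1⟩
      have hm : x ∈ s₀ ∩ s := Finset.mem_inter.2 ⟨hx0, hx⟩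
      simp [h2] at hm
    · rintro ⟨hsub, h1⟩
      refine ⟨h1, Finset.eq_empty_of_forall_notMem fun x hx => ?_⟩
      rcases Finset.mem_inter.1 hx with ⟨h0, hs⟩
      exact (Finset.mem_compl.1 (hsub hs)) h0
  have hterm : ∀ s : Finset (Fin P), IRKkw P k s * (if s₀ ∩ s = ∅ then (1:ℝ) else 0)
      = if s.card = k ∧ s₀ ∩ s = ∅ then ((P.choose k : ℝ))⁻¹ else 0 := by
    intro s; unfold IRKkw
    by_cases h1 : s.card = k <;> by_cases h2 : s₀ ∩ s = ∅ <;> simp [h1, h2]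
  simp_rw [hterm]
  rw [← Finset.sum_filter, hset, Finset.sum_const, Finset.card_powersetCard,
    Finset.card_compl, Fintype.card_fin, nsmul_eq_mul, div_eq_mul_inv]

lemma IRK_sum_kw_inter (P k : ℕ) (hk : k ≤ P) (s₀ : Finset (Fin P)) (a : ℝ) :
    ∑ s : Finset (Fin P), IRKkw P k s * (if (s₀ ∩ s).Nonempty then 1 - a else 1)
      = 1 - a * (1 - ((P - s₀.card).choose k : ℝ) / (P.choose k : ℝ)) := by
  have hterm : ∀ s : Finset (Fin P), IRKkw P k s * (if (s₀ ∩ s).Nonempty then 1 - a else 1)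
      = IRKkw P k s - a * (IRKkw P k s - IRKkw P k s * (if s₀ ∩ s = ∅ then (1:ℝ) else 0)) := by
    intro s
    by_cases h : s₀ ∩ s = ∅
    · simp [h, Finset.not_nonempty_iff_eq_empty.2 h]
    · have hne : (s₀ ∩ s).Nonempty := Finset.nonempty_iff_ne_empty.2 h
      simp only [h, hne, if_true, if_false, if_neg h, mul_zero, sub_zero]
      ring
  simp_rw [hterm]
  rw [Finset.sum_sub_distrib, ← Finset.mul_sum, Finset.sum_sub_distrib,
    IRK_sum_kw P k hk, IRK_sum_kw_disj P k s₀]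


def IRKgood {P n : ℕ} (x₀ : Fin n) (σ : Fin n → Finset (Fin P)) (b : Fin n → Fin n → Bool) : Prop :=
  (∀ x y : Fin n, ¬ x < y → b x y = false) ∧
  (∀ y : Fin n, y ≠ x₀ →
    ¬(((σ x₀) ∩ (σ y)).Nonempty ∧ (if x₀ < y then b x₀ y else b y x₀) = true))

instance {P n : ℕ} (x₀ : Fin n) (σ : Fin n → Finset (Fin P)) (b : Fin n → Fin n → Bool) :
    Decidable (IRKgood x₀ σ b) := by unfold IRKgood; infer_instance

lemma IRK_stage_b {P r n : ℕ} (α : Fin r → Fin r → ℝ) (hαs : ∀ i j, α i j = α j i)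
    (x₀ : Fin n) (t : Fin n → Fin r) (σ : Fin n → Finset (Fin P)) :
    ∑ b : Fin n → Fin n → Bool,
      (if IRKgood x₀ σ b then
        (∏ x : Fin n, ∏ y ∈ univ.filter (fun y => x < y),
          (if b x y then α (t x) (t y) else 1 - α (t x) (t y))) else 0)
      = ∏ y ∈ univ.erase x₀,
          (if ((σ x₀) ∩ (σ y)).Nonempty then 1 - α (t x₀) (t y) else 1) := by
  classical
  set e : Fin n → ℝ := fun y => if ((σ x₀) ∩ (σ y)).Nonempty then 1 - α (t x₀) (t y) else 1 with he
  set F : Fin n → Fin n → Bool → ℝ := fun x y v =>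
    if x < y then
      ((if v then α (t x) (t y) else 1 - α (t x) (t y)) *
       (if ((x = x₀ ∨ y = x₀) ∧ ((σ x) ∩ (σ y)).Nonempty ∧ v = true) then 0 else 1))
    else (if v = false then 1 else 0) with hF
  have claimA : ∀ b : Fin n → Fin n → Bool,
      (if IRKgood x₀ σ b then
        (∏ x : Fin n, ∏ y ∈ univ.filter (fun y => x < y),
          (if b x y then α (t x) (t y) else 1 - α (t x) (t y))) else 0)
      = ∏ x : Fin n, ∏ y : Fin n, F x y (b x y) := by
    intro b
    by_cases hg : IRKgood x₀ σ b
    · rw [if_pos hg]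
      refine Finset.prod_congr rfl fun x _ => ?_
      rw [← Finset.prod_filter_mul_prod_filter_not univ (fun y => x < y)
        (fun y => F x y (b x y))]
      have h2 : ∏ y ∈ univ.filter (fun y => ¬ x < y), F x y (b x y) = 1 := by
        refine Finset.prod_eq_one fun y hy => ?_
        have hxy : ¬ x < y := (Finset.mem_filter.1 hy).2
        simp only [hF]
        rw [if_neg hxy, if_pos (hg.1 x y hxy)]
      have h1 : ∏ y ∈ univ.filter (fun y => x < y), F x y (b x y)
          = ∏ y ∈ univ.filter (fun y => x < y),
              (if b x y then α (t x) (t y) else 1 - α (t x) (t y)) := by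
        refine Finset.prod_congr rfl fun y hy => ?_
        have hxy : x < y := (Finset.mem_filter.1 hy).2
        have hnot : ¬((x = x₀ ∨ y = x₀) ∧ ((σ x) ∩ (σ y)).Nonempty ∧ b x y = true) := by
          rintro ⟨hxx, hne, hbt⟩
          rcases hxx with rfl | rfl
          · exact hg.2 y (ne_of_gt hxy) ⟨hne, by rw [if_pos hxy]; exact hbt⟩
          · exact hg.2 x (ne_of_lt hxy)
              ⟨by rwa [Finset.inter_comm], by rw [if_neg (asymm hxy)]; exact hbt⟩
        simp only [hF]
        rw [if_pos hxy, if_neg hnot, mul_one]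
      rw [h1, h2, mul_one]
    · rw [if_neg hg]
      symm
      by_cases hc : ∀ x y : Fin n, ¬ x < y → b x y = false
      · have hB : ∃ y : Fin n, y ≠ x₀ ∧
            (((σ x₀) ∩ (σ y)).Nonempty ∧ (if x₀ < y then b x₀ y else b y x₀) = true) := by
          by_contra hB
          push_neg at hB
          exact hg ⟨hc, fun y hy h => hB y hy h.1 h.2⟩
        obtain ⟨y, hy, hne, hbit⟩ := hB
        rcases hy.lt_or_gt with hlt | hlt
        · refine Finset.prod_eq_zero (Finset.mem_univ y) ?_
          refine Finset.prod_eq_zero (Finset.mem_univ x₀) ?_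
          have hne' : ((σ y) ∩ (σ x₀)).Nonempty := by rwa [Finset.inter_comm]
          have hb' : b y x₀ = true := by rw [if_neg (asymm hlt)] at hbit; exact hbit
          simp [hF, hlt, hne', hb']
        · refine Finset.prod_eq_zero (Finset.mem_univ x₀) ?_
          refine Finset.prod_eq_zero (Finset.mem_univ y) ?_
          have hb' : b x₀ y = true := by rw [if_pos hlt] at hbit; exact hbit
          simp [hF, hlt, hne, hb']
      · push_neg at hc
        obtain ⟨x, y, hxy, hbt⟩ := hc
        refine Finset.prod_eq_zero (Finset.mem_univ x) ?_
        refine Finset.prod_eq_zero (Finset.mem_univ y) ?_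
        simp only [hF]
        rw [if_neg (not_lt.2 hxy), if_neg hbt]
  have claimB : ∑ b : Fin n → Fin n → Bool, ∏ x : Fin n, ∏ y : Fin n, F x y (b x y)
      = ∏ x : Fin n, ∏ y : Fin n, ∑ v : Bool, F x y v := by
    rw [show (∏ x : Fin n, ∏ y : Fin n, ∑ v : Bool, F x y v)
        = ∏ x : Fin n, ∑ g ∈ Fintype.piFinset (fun _ : Fin n => (univ : Finset Bool)),
            ∏ y : Fin n, F x y (g y) from
      Finset.prod_congr rfl fun x _ => Finset.prod_univ_sum _ _]
    simp only [Fintype.piFinset_univ]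
    rw [Finset.prod_univ_sum (fun _ : Fin n => (univ : Finset (Fin n → Bool)))
      (fun x g => ∏ y : Fin n, F x y (g y)), Fintype.piFinset_univ]
  have claimC : ∀ x y : Fin n, (∑ v : Bool, F x y v)
      = if (x < y ∧ (x = x₀ ∨ y = x₀) ∧ ((σ x) ∩ (σ y)).Nonempty)
        then 1 - α (t x) (t y) else 1 := by
    intro x y
    rw [Fintype.sum_bool]
    by_cases h1 : x < y
    · by_cases h2 : (x = x₀ ∨ y = x₀) ∧ ((σ x) ∩ (σ y)).Nonempty
      · simp [hF, h1, h2.1, h2.2]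
      · simp only [hF]
        have h2' : ¬(x < y ∧ (x = x₀ ∨ y = x₀) ∧ ((σ x) ∩ (σ y)).Nonempty) :=
          fun h => h2 h.2
        simp [h1, h2, h2']
    · simp [hF, h1, fun h => h1 (And.left h)]
  have hsplit2 : ∀ x y : Fin n,
      (if (x < y ∧ (x = x₀ ∨ y = x₀) ∧ ((σ x) ∩ (σ y)).Nonempty)
        then 1 - α (t x) (t y) else 1)
      = (if x = x₀ ∧ x₀ < y then e y else 1) * (if y = x₀ ∧ x < x₀ then e x else 1) := by
    intro x y
    by_cases hx : x = x₀
    · by_cases hlt : x₀ < y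
      · by_cases hne : ((σ x₀) ∩ (σ y)).Nonempty
        · simp [he, hx, hlt, hne, ne_of_gt hlt]
        · simp [he, hx, hlt, hne]
      · simp [he, hx, hlt]
    · by_cases hy : y = x₀
      · by_cases hlt : x < x₀
        · by_cases hne : ((σ x₀) ∩ (σ x)).Nonempty
          · have hne' : ((σ x) ∩ (σ x₀)).Nonempty := by rwa [Finset.inter_comm]
            simp [he, hy, hx, hlt, hne, hne', hαs (t x) (t x₀)]
          · have hne' : ¬((σ x) ∩ (σ x₀)).Nonempty :=
              fun h => hne (by rwa [Finset.inter_comm])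
            simp [he, hy, hx, hlt, hne, hne']
        · simp [he, hy, hx, hlt]
      · simp [he, hx, hy]
  have hsplit : ∀ y : Fin n, (if y ≠ x₀ then e y else 1)
      = (if x₀ < y then e y else 1) * (if y < x₀ then e y else 1) := by
    intro y
    rcases lt_trichotomy x₀ y with h | h | h
    · rw [if_pos h, if_neg (asymm h), if_pos (ne_of_gt h), mul_one]
    · subst h
      simp
    · rw [if_neg (asymm h), if_pos h, if_pos (ne_of_lt h), one_mul]
  calc ∑ b : Fin n → Fin n → Bool,
      (if IRKgood x₀ σ b then
        (∏ x : Fin n, ∏ y ∈ univ.filter (fun y => x < y),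
          (if b x y then α (t x) (t y) else 1 - α (t x) (t y))) else 0)
      = ∑ b : Fin n → Fin n → Bool, ∏ x : Fin n, ∏ y : Fin n, F x y (b x y) :=
        Finset.sum_congr rfl fun b _ => claimA b
    _ = ∏ x : Fin n, ∏ y : Fin n, ∑ v : Bool, F x y v := claimB
    _ = ∏ x : Fin n, ∏ y : Fin n,
          ((if x = x₀ ∧ x₀ < y then e y else 1) * (if y = x₀ ∧ x < x₀ then e x else 1)) :=
        Finset.prod_congr rfl fun x _ => Finset.prod_congr rfl fun y _ =>
          (claimC x y).trans (hsplit2 x y)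
    _ = (∏ x : Fin n, ∏ y : Fin n, (if x = x₀ ∧ x₀ < y then e y else 1)) *
        (∏ x : Fin n, ∏ y : Fin n, (if y = x₀ ∧ x < x₀ then e x else 1)) := by
        rw [← Finset.prod_mul_distrib]
        exact Finset.prod_congr rfl fun x _ => Finset.prod_mul_distrib
    _ = (∏ y : Fin n, (if x₀ < y then e y else 1)) *
        (∏ x : Fin n, (if x < x₀ then e x else 1)) := by
        congr 1
        · rw [Finset.prod_eq_single x₀ (fun x _ hx =>
            Finset.prod_eq_one fun y _ => if_neg (fun h => hx h.1))
            (fun h => absurd (Finset.mem_univ x₀) h)]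
          refine Finset.prod_congr rfl fun y _ => ?_
          by_cases h : x₀ < y
          · rw [if_pos ⟨rfl, h⟩, if_pos h]
          · rw [if_neg (fun hh => h hh.2), if_neg h]
        · refine Finset.prod_congr rfl fun x _ => ?_
          rw [Finset.prod_eq_single x₀ (fun y _ hy => if_neg (fun h => hy h.1))
            (fun h => absurd (Finset.mem_univ x₀) h)]
          by_cases h : x < x₀
          · rw [if_pos ⟨rfl, h⟩, if_pos h]
          · rw [if_neg (fun hh => h hh.2), if_neg h]
    _ = ∏ y : Fin n, ((if x₀ < y then e y else 1) * (if y < x₀ then e y else 1)) :=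
        Finset.prod_mul_distrib.symm
    _ = ∏ y : Fin n, (if y ≠ x₀ then e y else 1) :=
        Finset.prod_congr rfl fun y _ => (hsplit y).symm
    _ = ∏ y ∈ univ.erase x₀, e y := by
        rw [← Finset.prod_filter, Finset.filter_ne']


lemma IRK_stage_sigma {P r n : ℕ} (K : Fin r → ℕ) (α : Fin r → Fin r → ℝ)
    (hKP : ∀ i j, K i + K j ≤ P) (x₀ : Fin n) (t : Fin n → Fin r) :
    ∑ σ : Fin n → Finset (Fin P),
      ((∏ x, IRKkw P (K (t x)) (σ x)) *
       (∏ y ∈ univ.erase x₀,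
         (if ((σ x₀) ∩ (σ y)).Nonempty then 1 - α (t x₀) (t y) else 1)))
      = ∏ y ∈ univ.erase x₀, (1 - α (t x₀) (t y) * pEdge P K (t x₀) (t y)) := by
  classical
  have hKle : ∀ j : Fin r, K j ≤ P := fun j => le_trans (Nat.le_add_left _ _) (hKP j j)
  set G : Finset (Fin P) → Fin n → Finset (Fin P) → ℝ := fun s₀ x s =>
    if x = x₀ then IRKkw P (K (t x)) s * (if s = s₀ then 1 else 0)
    else IRKkw P (K (t x)) s * (if (s₀ ∩ s).Nonempty then 1 - α (t x₀) (t x) else 1) with hG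
  have claim1 : ∀ σ : Fin n → Finset (Fin P),
      ((∏ x, IRKkw P (K (t x)) (σ x)) *
       (∏ y ∈ univ.erase x₀,
         (if ((σ x₀) ∩ (σ y)).Nonempty then 1 - α (t x₀) (t y) else 1)))
      = ∑ s₀ : Finset (Fin P), ∏ x : Fin n, G s₀ x (σ x) := by
    intro σ
    rw [Finset.sum_eq_single (σ x₀)]
    · rw [← Finset.mul_prod_erase univ (fun x => G (σ x₀) x (σ x)) (Finset.mem_univ x₀),
          ← Finset.mul_prod_erase univ (fun x => IRKkw P (K (t x)) (σ x)) (Finset.mem_univ x₀)]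
      have hx₀ : G (σ x₀) x₀ (σ x₀) = IRKkw P (K (t x₀)) (σ x₀) := by
        simp [hG]
      have hrest : ∏ x ∈ univ.erase x₀, G (σ x₀) x (σ x)
          = ∏ x ∈ univ.erase x₀, (IRKkw P (K (t x)) (σ x) *
              (if ((σ x₀) ∩ (σ x)).Nonempty then 1 - α (t x₀) (t x) else 1)) := by
        refine Finset.prod_congr rfl fun x hx => ?_
        have hne : x ≠ x₀ := Finset.ne_of_mem_erase hx
        simp [hG, hne]
      rw [hx₀, hrest, Finset.prod_mul_distrib]
      ring
    · intro s₀ _ hs₀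
      refine Finset.prod_eq_zero (Finset.mem_univ x₀) ?_
      simp [hG, hs₀]
      exact fun h => absurd h.symm hs₀
    · intro h; exact absurd (Finset.mem_univ (σ x₀)) h
  have claim2 : ∀ s₀ : Finset (Fin P),
      (∏ x : Fin n, ∑ s : Finset (Fin P), G s₀ x s)
      = IRKkw P (K (t x₀)) s₀ *
        ∏ y ∈ univ.erase x₀,
          (1 - α (t x₀) (t y) *
            (1 - (((P - s₀.card).choose (K (t y)) : ℝ) / ((P.choose (K (t y))) : ℝ)))) := by
    intro s₀
    rw [← Finset.mul_prod_erase univ (fun x => ∑ s : Finset (Fin P), G s₀ x s)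
      (Finset.mem_univ x₀)]
    congr 1
    · simp [hG, mul_ite, mul_one, mul_zero, Finset.sum_ite_eq']
    · refine Finset.prod_congr rfl fun y hy => ?_
      have hyne : y ≠ x₀ := Finset.ne_of_mem_erase hy
      have hsum : ∑ s : Finset (Fin P), G s₀ y s
          = ∑ s : Finset (Fin P), IRKkw P (K (t y)) s *
              (if (s₀ ∩ s).Nonempty then 1 - α (t x₀) (t y) else 1) :=
        Finset.sum_congr rfl fun s _ => by simp [hG, hyne]
      rw [hsum, IRK_sum_kw_inter P (K (t y)) (hKle (t y)) s₀ (α (t x₀) (t y))]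
  calc ∑ σ : Fin n → Finset (Fin P),
      ((∏ x, IRKkw P (K (t x)) (σ x)) *
       (∏ y ∈ univ.erase x₀,
         (if ((σ x₀) ∩ (σ y)).Nonempty then 1 - α (t x₀) (t y) else 1)))
      = ∑ σ : Fin n → Finset (Fin P), ∑ s₀ : Finset (Fin P), ∏ x : Fin n, G s₀ x (σ x) :=
        Finset.sum_congr rfl fun σ _ => claim1 σ
    _ = ∑ s₀ : Finset (Fin P), ∑ σ : Fin n → Finset (Fin P), ∏ x : Fin n, G s₀ x (σ x) :=
        Finset.sum_comm
    _ = ∑ s₀ : Finset (Fin P), ∏ x : Fin n, ∑ s : Finset (Fin P), G s₀ x s := by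
        refine Finset.sum_congr rfl fun s₀ _ => ?_
        rw [Finset.prod_univ_sum (fun _ : Fin n => (univ : Finset (Finset (Fin P))))
          (fun x s => G s₀ x s), Fintype.piFinset_univ]
    _ = ∑ s₀ : Finset (Fin P), IRKkw P (K (t x₀)) s₀ *
          ∏ y ∈ univ.erase x₀,
            (1 - α (t x₀) (t y) *
              (1 - (((P - s₀.card).choose (K (t y)) : ℝ) / ((P.choose (K (t y))) : ℝ)))) :=
        Finset.sum_congr rfl fun s₀ _ => claim2 s₀
    _ = ∑ s₀ : Finset (Fin P), IRKkw P (K (t x₀)) s₀ *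
          ∏ y ∈ univ.erase x₀, (1 - α (t x₀) (t y) * pEdge P K (t x₀) (t y)) := by
        refine Finset.sum_congr rfl fun s₀ _ => ?_
        by_cases hcard : s₀.card = K (t x₀)
        · rw [hcard]
          congr 1
          refine Finset.prod_congr rfl fun y _ => ?_
          simp only [pEdge]
          rw [if_pos (hKP (t x₀) (t y))]
        · simp [IRKkw, hcard]
    _ = ∏ y ∈ univ.erase x₀, (1 - α (t x₀) (t y) * pEdge P K (t x₀) (t y)) := by
        rw [← Finset.sum_mul, IRK_sum_kw P (K (t x₀)) (hKle (t x₀)), one_mul]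

lemma IRK_stage_t {P r n : ℕ} (K : Fin r → ℕ) (μ : Fin r → ℝ) (α : Fin r → Fin r → ℝ)
    (hμsum : ∑ i, μ i = 1) (x₀ : Fin n) :
    ∑ t : Fin n → Fin r,
      ((∏ x, μ (t x)) *
       (∏ y ∈ univ.erase x₀, (1 - α (t x₀) (t y) * pEdge P K (t x₀) (t y))))
      = ∑ i, μ i * (1 - LamE μ α P K i) ^ (n - 1) := by
  classical
  set G : Fin r → Fin n → Fin r → ℝ := fun i x j =>
    if x = x₀ then μ j * (if j = i then 1 else 0)
    else μ j * (1 - α i j * pEdge P K i j) with hG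
  have claim1 : ∀ t : Fin n → Fin r,
      ((∏ x, μ (t x)) *
       (∏ y ∈ univ.erase x₀, (1 - α (t x₀) (t y) * pEdge P K (t x₀) (t y))))
      = ∑ i : Fin r, ∏ x : Fin n, G i x (t x) := by
    intro t
    rw [Finset.sum_eq_single (t x₀)]
    · rw [← Finset.mul_prod_erase univ (fun x => G (t x₀) x (t x)) (Finset.mem_univ x₀),
          ← Finset.mul_prod_erase univ (fun x => μ (t x)) (Finset.mem_univ x₀)]
      have hx₀ : G (t x₀) x₀ (t x₀) = μ (t x₀) := by simp [hG]
      have hrest : ∏ x ∈ univ.erase x₀, G (t x₀) x (t x)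
          = ∏ x ∈ univ.erase x₀, (μ (t x) * (1 - α (t x₀) (t x) * pEdge P K (t x₀) (t x))) := by
        refine Finset.prod_congr rfl fun x hx => ?_
        have hne : x ≠ x₀ := Finset.ne_of_mem_erase hx
        simp [hG, hne]
      rw [hx₀, hrest, Finset.prod_mul_distrib]
      ring
    · intro i _ hi
      refine Finset.prod_eq_zero (Finset.mem_univ x₀) ?_
      simp [hG, hi]
      exact fun h => absurd h.symm hi
    · intro h; exact absurd (Finset.mem_univ (t x₀)) h
  have hsum : ∀ i : Fin r, (∑ j, μ j * (1 - α i j * pEdge P K i j)) = 1 - LamE μ α P K i := by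
    intro i
    have hterm : ∀ j, μ j * (1 - α i j * pEdge P K i j)
        = μ j - μ j * (α i j * pEdge P K i j) := fun j => by ring
    simp_rw [hterm]
    rw [Finset.sum_sub_distrib, hμsum, LamE]
  have hcard : (univ.erase x₀).card = n - 1 := by
    rw [Finset.card_erase_of_mem (Finset.mem_univ x₀), Finset.card_univ, Fintype.card_fin]
  calc ∑ t : Fin n → Fin r,
      ((∏ x, μ (t x)) *
       (∏ y ∈ univ.erase x₀, (1 - α (t x₀) (t y) * pEdge P K (t x₀) (t y))))
      = ∑ t : Fin n → Fin r, ∑ i : Fin r, ∏ x : Fin n, G i x (t x) :=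
        Finset.sum_congr rfl fun t _ => claim1 t
    _ = ∑ i : Fin r, ∑ t : Fin n → Fin r, ∏ x : Fin n, G i x (t x) := Finset.sum_comm
    _ = ∑ i : Fin r, ∏ x : Fin n, ∑ j : Fin r, G i x j := by
        refine Finset.sum_congr rfl fun i _ => ?_
        rw [Finset.prod_univ_sum (fun _ : Fin n => (univ : Finset (Fin r)))
          (fun x j => G i x j), Fintype.piFinset_univ]
    _ = ∑ i : Fin r, μ i * (1 - LamE μ α P K i) ^ (n - 1) := by
        refine Finset.sum_congr rfl fun i _ => ?_
        rw [← Finset.mul_prod_erase univ (fun x => ∑ j : Fin r, G i x j) (Finset.mem_univ x₀)]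
        congr 1
        · simp [hG, mul_ite, mul_one, mul_zero, Finset.sum_ite_eq']
        · have hrest : ∏ x ∈ univ.erase x₀, (∑ j : Fin r, G i x j)
              = ∏ x ∈ univ.erase x₀, (1 - LamE μ α P K i) := by
            refine Finset.prod_congr rfl fun x hx => ?_
            have hne : x ≠ x₀ := Finset.ne_of_mem_erase hx
            rw [show (∑ j : Fin r, G i x j)
                = ∑ j : Fin r, μ j * (1 - α i j * pEdge P K i j) from
              Finset.sum_congr rfl fun j _ => by simp [hG, hne]]
            exact hsum i
          rw [hrest, Finset.prod_const, hcard]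


section IRKbounds

variable {r P : ℕ} {K : Fin r → ℕ} {μ : Fin r → ℝ} {α : Fin r → Fin r → ℝ}

lemma IRK_pEdge_nonneg (P : ℕ) (K : Fin r → ℕ) (i j : Fin r) : 0 ≤ pEdge P K i j := by
  unfold pEdge
  split
  · have h1 : ((P - K i).choose (K j) : ℝ) / (P.choose (K j) : ℝ) ≤ 1 := by
      apply div_le_one_of_le₀
      · exact_mod_cast Nat.choose_le_choose (K j) (Nat.sub_le P (K i))
      · positivity
    linarith
  · norm_num

lemma IRK_pEdge_le_one (P : ℕ) (K : Fin r → ℕ) (i j : Fin r) : pEdge P K i j ≤ 1 := by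
  unfold pEdge
  split
  · have h0 : (0:ℝ) ≤ ((P - K i).choose (K j) : ℝ) / (P.choose (K j) : ℝ) := by positivity
    linarith
  · norm_num

lemma IRK_LamE_nonneg (hμ0 : ∀ i, 0 ≤ μ i) (hα0 : ∀ i j, 0 ≤ α i j) (i : Fin r) :
    0 ≤ LamE μ α P K i := by
  refine Finset.sum_nonneg fun j _ => ?_
  have := IRK_pEdge_nonneg P K i j
  have := hα0 i j
  have := hμ0 j
  positivity

lemma IRK_LamE_le_one (hμ0 : ∀ i, 0 ≤ μ i) (hμsum : ∑ i, μ i = 1)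
    (hα0 : ∀ i j, 0 ≤ α i j) (hα1 : ∀ i j, α i j ≤ 1) (i : Fin r) :
    LamE μ α P K i ≤ 1 := by
  rw [← hμsum]
  refine Finset.sum_le_sum fun j _ => ?_
  refine mul_le_of_le_one_right (hμ0 j) ?_
  exact mul_le_one₀ (hα1 i j) (IRK_pEdge_nonneg P K i j) (IRK_pEdge_le_one P K i j)

lemma IRK_LamMin_le (i : Fin r) : LamMin μ α P K ≤ LamE μ α P K i :=
  ciInf_le (Set.Finite.bddBelow (Set.finite_range _)) i

lemma IRK_LamMin_nonneg (hr : 0 < r) (hμ0 : ∀ i, 0 ≤ μ i) (hα0 : ∀ i j, 0 ≤ α i j) :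
    0 ≤ LamMin μ α P K := by
  have : Nonempty (Fin r) := ⟨⟨0, hr⟩⟩
  exact le_ciInf fun i => IRK_LamE_nonneg hμ0 hα0 i

lemma IRK_LamMin_le_one (hr : 0 < r) (hμ0 : ∀ i, 0 ≤ μ i) (hμsum : ∑ i, μ i = 1)
    (hα0 : ∀ i j, 0 ≤ α i j) (hα1 : ∀ i j, α i j ≤ 1) :
    LamMin μ α P K ≤ 1 :=
  le_trans (IRK_LamMin_le ⟨0, hr⟩) (IRK_LamE_le_one hμ0 hμsum hα0 hα1 _)

end IRKbounds

lemma IRK_lintegral_le (hr : 0 < r)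
    (hμ0 : ∀ i, 0 ≤ μ i) (hμsum : ∑ i, μ i = 1)
    (hα0 : ∀ i j, 0 ≤ α i j) (hα1 : ∀ i j, α i j ≤ 1) (hαs : ∀ i j, α i j = α j i)
    (hKP : ∀ i j, K i + K j ≤ P)
    (M : HetModel r n P K μ α Ω Pr) :
    ∫⁻ ω, (∑ x : Fin n, {ω' | M.Isolated ω' x}.indicator 1 ω) ∂Pr
      ≤ ENNReal.ofReal ((n : ℝ) * (1 - LamMin μ α P K) ^ (n - 1)) := by
  classical
  set W : (Fin n → Fin r) → (Fin n → Finset (Fin P)) → (Fin n → Fin n → Bool) → ℝ :=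
    fun t σ b =>
      ((∏ x, μ (t x)) *
       (∏ x, if (σ x).card = K (t x) then ((P.choose (K (t x)) : ℝ))⁻¹ else 0) *
       (∏ x : Fin n, ∏ y ∈ univ.filter (fun y => x < y),
          (if b x y then α (t x) (t y) else 1 - α (t x) (t y)))) with hW
  have hWnn : ∀ t σ b, 0 ≤ W t σ b := by
    intro t σ b
    refine mul_nonneg (mul_nonneg ?_ ?_) ?_
    · exact Finset.prod_nonneg fun x _ => hμ0 _
    · refine Finset.prod_nonneg fun x _ => ?_
      split
      · positivity
      · exact le_refl 0
    · refine Finset.prod_nonneg fun x _ => Finset.prod_nonneg fun y _ => ?_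
      split
      · exact hα0 _ _
      · have := hα1 (t x) (t y); linarith
  have key : ∀ x₀ : Fin n, Pr {ω | M.Isolated ω x₀}
      ≤ ENNReal.ofReal ((1 - LamMin μ α P K) ^ (n - 1)) := by
    intro x₀
    have hcover : {ω | M.Isolated ω x₀} ⊆
        ⋃ t ∈ (univ : Finset (Fin n → Fin r)),
          ⋃ σ ∈ (univ : Finset (Fin n → Finset (Fin P))),
            ⋃ b ∈ (univ.filter (fun b : Fin n → Fin n → Bool => IRKgood x₀ σ b)),
              {ω | M.typ ω = t ∧ M.keyring ω = σ ∧
                   ∀ x y : Fin n, x < y → M.chan ω x y = b x y} := by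
      intro ω hω
      set b' : Fin n → Fin n → Bool := fun x y => if x < y then M.chan ω x y else false with hb'
      have hgood : IRKgood x₀ (M.keyring ω) b' := by
        constructor
        · intro x y hxy
          simp [hb', hxy]
        · intro y hy hcontra
          obtain ⟨hne, hbit⟩ := hcontra
          apply hω y
          refine ⟨(fun h => hy h.symm), hne, ?_⟩
          rcases hy.lt_or_gt with hlt | hlt
          · rw [if_neg (asymm hlt)]
            rw [if_neg (asymm hlt)] at hbit
            simpa [hb', hlt] using hbit
          · rw [if_pos hlt]
            rw [if_pos hlt] at hbit
            simpa [hb', hlt] using hbit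
      refine Set.mem_biUnion (Finset.mem_univ (M.typ ω)) ?_
      refine Set.mem_biUnion (Finset.mem_univ (M.keyring ω)) ?_
      refine Set.mem_biUnion (Finset.mem_filter.2 ⟨Finset.mem_univ b', hgood⟩) ?_
      refine ⟨rfl, rfl, ?_⟩
      intro x y hxy
      simp [hb', hxy]
    have hsum : Pr {ω | M.Isolated ω x₀}
        ≤ ∑ t : Fin n → Fin r, ∑ σ : Fin n → Finset (Fin P),
            ∑ b ∈ univ.filter (fun b : Fin n → Fin n → Bool => IRKgood x₀ σ b),
              ENNReal.ofReal (W t σ b) := by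
      refine le_trans (measure_mono hcover) ?_
      refine le_trans (measure_biUnion_finset_le _ _) (Finset.sum_le_sum fun t _ => ?_)
      refine le_trans (measure_biUnion_finset_le _ _) (Finset.sum_le_sum fun σ _ => ?_)
      refine le_trans (measure_biUnion_finset_le _ _) (Finset.sum_le_sum fun b _ => ?_)
      rw [M.joint t σ b]
    have hreal : ∑ t : Fin n → Fin r, ∑ σ : Fin n → Finset (Fin P),
        ∑ b ∈ univ.filter (fun b : Fin n → Fin n → Bool => IRKgood x₀ σ b), W t σ b
        = ∑ i, μ i * (1 - LamE μ α P K i) ^ (n - 1) := by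
      have h1 : ∀ (t : Fin n → Fin r) (σ : Fin n → Finset (Fin P)),
          ∑ b ∈ univ.filter (fun b : Fin n → Fin n → Bool => IRKgood x₀ σ b), W t σ b
          = (∏ x, μ (t x)) * ((∏ x, IRKkw P (K (t x)) (σ x)) *
              (∏ y ∈ univ.erase x₀,
                (if ((σ x₀) ∩ (σ y)).Nonempty then 1 - α (t x₀) (t y) else 1))) := by
        intro t σ
        rw [Finset.sum_filter]
        have hterm : ∀ b : Fin n → Fin n → Bool,
            (if IRKgood x₀ σ b then W t σ b else 0)
            = ((∏ x, μ (t x)) * (∏ x, IRKkw P (K (t x)) (σ x))) *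
              (if IRKgood x₀ σ b then
                (∏ x : Fin n, ∏ y ∈ univ.filter (fun y => x < y),
                  (if b x y then α (t x) (t y) else 1 - α (t x) (t y))) else 0) := by
          intro b
          by_cases hb : IRKgood x₀ σ b
          · rw [if_pos hb, if_pos hb, hW]
            rfl
          · rw [if_neg hb, if_neg hb, mul_zero]
        simp_rw [hterm]
        rw [← Finset.mul_sum, IRK_stage_b α hαs x₀ t σ, mul_assoc]
      simp_rw [h1]
      have h2 : ∀ t : Fin n → Fin r,
          ∑ σ : Fin n → Finset (Fin P),
            (∏ x, μ (t x)) * ((∏ x, IRKkw P (K (t x)) (σ x)) *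
              (∏ y ∈ univ.erase x₀,
                (if ((σ x₀) ∩ (σ y)).Nonempty then 1 - α (t x₀) (t y) else 1)))
          = (∏ x, μ (t x)) *
              (∏ y ∈ univ.erase x₀, (1 - α (t x₀) (t y) * pEdge P K (t x₀) (t y))) := by
        intro t
        rw [← Finset.mul_sum, IRK_stage_sigma K α hKP x₀ t]
      simp_rw [h2]
      exact IRK_stage_t K μ α hμsum x₀
    have hfinal : ∑ i, μ i * (1 - LamE μ α P K i) ^ (n - 1)
        ≤ (1 - LamMin μ α P K) ^ (n - 1) := by
      have hstep : ∀ i : Fin r, μ i * (1 - LamE μ α P K i) ^ (n - 1)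
          ≤ μ i * (1 - LamMin μ α P K) ^ (n - 1) := by
        intro i
        refine mul_le_mul_of_nonneg_left ?_ (hμ0 i)
        refine pow_le_pow_left₀ ?_ ?_ _
        · have := IRK_LamE_le_one (P := P) (K := K) hμ0 hμsum hα0 hα1 i
          linarith
        · have := IRK_LamMin_le (P := P) (K := K) (μ := μ) (α := α) i
          linarith
      calc ∑ i, μ i * (1 - LamE μ α P K i) ^ (n - 1)
          ≤ ∑ i, μ i * (1 - LamMin μ α P K) ^ (n - 1) := Finset.sum_le_sum fun i _ => hstep i
        _ = (1 - LamMin μ α P K) ^ (n - 1) := by rw [← Finset.sum_mul, hμsum, one_mul]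
    refine le_trans hsum ?_
    have hofsum : ∑ t : Fin n → Fin r, ∑ σ : Fin n → Finset (Fin P),
        ∑ b ∈ univ.filter (fun b : Fin n → Fin n → Bool => IRKgood x₀ σ b),
          ENNReal.ofReal (W t σ b)
        = ENNReal.ofReal (∑ t : Fin n → Fin r, ∑ σ : Fin n → Finset (Fin P),
            ∑ b ∈ univ.filter (fun b : Fin n → Fin n → Bool => IRKgood x₀ σ b), W t σ b) := by
      rw [ENNReal.ofReal_sum_of_nonneg (fun t _ => Finset.sum_nonneg fun σ _ =>
        Finset.sum_nonneg fun b _ => hWnn t σ b)]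
      refine Finset.sum_congr rfl fun t _ => ?_
      rw [ENNReal.ofReal_sum_of_nonneg (fun σ _ => Finset.sum_nonneg fun b _ => hWnn t σ b)]
      refine Finset.sum_congr rfl fun σ _ => ?_
      rw [ENNReal.ofReal_sum_of_nonneg (fun b _ => hWnn t σ b)]
    rw [hofsum, hreal]
    exact ENNReal.ofReal_le_ofReal hfinal
  calc ∫⁻ ω, (∑ x : Fin n, {ω' | M.Isolated ω' x}.indicator 1 ω) ∂Pr
      ≤ ∫⁻ ω, (∑ x : Fin n,
          (toMeasurable Pr {ω' | M.Isolated ω' x}).indicator 1 ω) ∂Pr := by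
        refine lintegral_mono fun ω => Finset.sum_le_sum fun x _ => ?_
        exact Set.indicator_le_indicator_of_subset
          (subset_toMeasurable Pr _) (fun _ => zero_le) ω
    _ = ∑ x : Fin n, ∫⁻ ω, (toMeasurable Pr {ω' | M.Isolated ω' x}).indicator 1 ω ∂Pr := by
        refine lintegral_finset_sum _ fun x _ => ?_
        exact (measurable_const.indicator (measurableSet_toMeasurable Pr _))
    _ = ∑ x : Fin n, Pr {ω' | M.Isolated ω' x} := by
        refine Finset.sum_congr rfl fun x _ => ?_
        rw [lintegral_indicator (measurableSet_toMeasurable Pr _)]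
        simp only [Pi.one_apply]
        rw [setLIntegral_one, measure_toMeasurable]
    _ ≤ ∑ x : Fin n, ENNReal.ofReal ((1 - LamMin μ α P K) ^ (n - 1)) :=
        Finset.sum_le_sum fun x _ => key x
    _ = ENNReal.ofReal ((n : ℝ) * (1 - LamMin μ α P K) ^ (n - 1)) := by
        rw [Finset.sum_const, Finset.card_univ, Fintype.card_fin, nsmul_eq_mul,
          ENNReal.ofReal_mul (by positivity : (0:ℝ) ≤ (n:ℝ)), ENNReal.ofReal_natCast]

/-- under any scaling with `Λ_m(n) = c_n log n / n` and
`c_n → c > 1`, the expected number of isolated vertices of `H(n; μ, Θ_n)`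
tends to `0`. -/
theorem expected_isolated_tendsto_zero
    (hr : 0 < r)
    (hμpos : ∀ i, 0 < μ i) (hμsum : ∑ i, μ i = 1)
    (Pn : ℕ → ℕ) (Kn : ℕ → Fin r → ℕ)
    (hKpos : ∀ n i, 1 ≤ Kn n i)
    (hKmono : ∀ n, Monotone (Kn n))
    (hKP : ∀ n i, 2 * Kn n i ≤ Pn n)
    (αn : ℕ → Fin r → Fin r → ℝ)
    (hα0 : ∀ n i j, 0 < αn n i j) (hα1 : ∀ n i j, αn n i j < 1)
    (hαsymm : ∀ n i j, αn n i j = αn n j i)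
    (c : ℝ) (hc : 1 < c) (cn : ℕ → ℝ)
    (hcn : Tendsto cn atTop (nhds c))
    (hscal : ∀ n, 2 ≤ n →
      LamMin μ (αn n) (Pn n) (Kn n) = cn n * Real.log n / n)
    (Ω : ℕ → Type) [mΩ : ∀ n, MeasurableSpace (Ω n)]
    (Pr : ∀ n, Measure (Ω n)) (hPr : ∀ n, IsProbabilityMeasure (Pr n))
    (M : ∀ n, HetModel r n (Pn n) (Kn n) μ (αn n) (Ω n) (Pr n)) :
    Tendsto
      (fun n => ∫⁻ ω, (∑ x : Fin n, {ω' | (M n).Isolated ω' x}.indicator 1 ω) ∂(Pr n))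
      atTop (nhds (0 : ENNReal)) := by
  have hKPn : ∀ n i j, Kn n i + Kn n j ≤ Pn n := by
    intro n i j
    rcases le_total (Kn n i) (Kn n j) with h | h
    · have := hKP n j; omega
    · have := hKP n i; omega
  have hbound : ∀ n : ℕ,
      (∫⁻ ω, (∑ x : Fin n, {ω' | (M n).Isolated ω' x}.indicator 1 ω) ∂(Pr n))
      ≤ ENNReal.ofReal ((n:ℝ) * (1 - LamMin μ (αn n) (Pn n) (Kn n))^(n-1)) := fun n =>
    IRK_lintegral_le hr (fun i => (hμpos i).le) hμsum (fun i j => (hα0 n i j).le)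
      (fun i j => (hα1 n i j).le) (hαsymm n) (hKPn n) (M n)
  set f : ℕ → ℝ := fun n => (n:ℝ) * (1 - LamMin μ (αn n) (Pn n) (Kn n))^(n-1) with hf
  set g : ℕ → ℝ := fun n =>
    (n:ℝ) * Real.exp (-(cn n * Real.log n / n) * ((n:ℝ) - 1)) with hg
  have hglim : Tendsto g atTop (nhds 0) := by
    have h1 : Tendsto (fun n : ℕ => ((n:ℝ)-1)/(n:ℝ)) atTop (nhds 1) := by
      have heq : (fun n : ℕ => ((n:ℝ)-1)/(n:ℝ)) =ᶠ[atTop] (fun n : ℕ => 1 - 1/(n:ℝ)) := by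
        filter_upwards [eventually_gt_atTop 0] with n hn
        have hne : (n:ℝ) ≠ 0 := by positivity
        field_simp
      rw [tendsto_congr' heq]
      have h0 : Tendsto (fun n : ℕ => 1 / (n:ℝ)) atTop (nhds 0) :=
        tendsto_one_div_atTop_nhds_zero_nat
      simpa using tendsto_const_nhds.sub h0
    have hd : Tendsto (fun n : ℕ => 1 - cn n * (((n:ℝ) - 1)/(n:ℝ))) atTop (nhds (1 - c)) := by
      have := hcn.mul h1
      simpa using tendsto_const_nhds.sub this
    have hlog : Tendsto (fun n : ℕ => Real.log n) atTop atTop :=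
      Real.tendsto_log_atTop.comp tendsto_natCast_atTop_atTop
    have hmul : Tendsto (fun n : ℕ => Real.log n * (1 - cn n * (((n:ℝ)-1)/(n:ℝ)))) atTop atBot :=
      Tendsto.atTop_mul_neg (by linarith) hlog hd
    have hexp : Tendsto
        (fun n : ℕ => Real.exp (Real.log n * (1 - cn n * (((n:ℝ)-1)/(n:ℝ)))))
        atTop (nhds 0) := Real.tendsto_exp_atBot.comp hmul
    have heq : (fun n : ℕ => Real.exp (Real.log n * (1 - cn n * (((n:ℝ)-1)/(n:ℝ)))))
        =ᶠ[atTop] g := by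
      filter_upwards [eventually_gt_atTop 0] with n hn
      have hn0 : (0:ℝ) < (n:ℝ) := by exact_mod_cast hn
      have hne : (n:ℝ) ≠ 0 := ne_of_gt hn0
      rw [hg]
      rw [show Real.log n * (1 - cn n * (((n:ℝ)-1)/(n:ℝ)))
          = Real.log n + (-(cn n * Real.log n / (n:ℝ)) * ((n:ℝ)-1)) from by
        field_simp; ring]
      rw [Real.exp_add, Real.exp_log hn0]
    exact Tendsto.congr' heq hexp
  have hfg : ∀ᶠ n in atTop, f n ≤ g n := by
    filter_upwards [eventually_ge_atTop 2] with n hn2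
    set Λ := LamMin μ (αn n) (Pn n) (Kn n) with hΛ
    have hΛ0 : 0 ≤ Λ :=
      IRK_LamMin_nonneg hr (fun i => (hμpos i).le) (fun i j => (hα0 n i j).le)
    have hΛ1 : Λ ≤ 1 :=
      IRK_LamMin_le_one hr (fun i => (hμpos i).le) hμsum
        (fun i j => (hα0 n i j).le) (fun i j => (hα1 n i j).le)
    have hpow : (1 - Λ)^(n-1) ≤ Real.exp (-Λ)^(n-1) :=
      pow_le_pow_left₀ (by linarith) (Real.one_sub_le_exp_neg Λ) _
    have hcast : ((n-1 : ℕ):ℝ) = (n:ℝ) - 1 := by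
      have h1 : 1 ≤ n := le_trans one_le_two hn2
      push_cast [h1]
      ring
    have hexp : Real.exp (-Λ)^(n-1) = Real.exp (-Λ * ((n:ℝ)-1)) := by
      rw [← Real.exp_nat_mul, hcast]
      ring_nf
    have hΛeq : -Λ * ((n:ℝ)-1) = -(cn n * Real.log n / n) * ((n:ℝ) - 1) := by
      rw [hΛ, hscal n hn2]
    calc f n = (n:ℝ) * (1 - Λ)^(n-1) := rfl
      _ ≤ (n:ℝ) * Real.exp (-Λ)^(n-1) := by
          refine mul_le_mul_of_nonneg_left hpow (by positivity)
      _ = (n:ℝ) * Real.exp (-(cn n * Real.log n / n) * ((n:ℝ) - 1)) := by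
          rw [hexp, hΛeq]
      _ = g n := rfl
  have hof : Tendsto (fun n => ENNReal.ofReal (g n)) atTop (nhds 0) := by
    have := ENNReal.tendsto_ofReal hglim
    simpa using this
  refine tendsto_of_tendsto_of_tendsto_of_le_of_le' tendsto_const_nhds hof
    (Eventually.of_forall fun n => zero_le) ?_
  filter_upwards [hfg] with n hn
  exact le_trans (hbound n) (ENNReal.ofReal_le_ofReal hn)
end

section
/- Consider a scaling satisfying the scaling condition Λ_m(n) = c_n (log n)/n with lim_{n→∞} c_n = c, where 0 < c < 1. Let x_{n,1} be the indicator random variable of the event that in H(n; μ, Θ_n) vertex v_1 has type m(n) and is isolated. Then lim_{n→∞} n·E[x_{n,1}] = ∞. Equivalently, lim_{n→∞} n·μ_{m(n)}·(1 − Λ_m(n))^{n−1} = ∞. -/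
open MeasureTheory Finset Filter

variable {r n P : ℕ} {K : Fin r → ℕ} {μ : Fin r → ℝ} {α : Fin r → Fin r → ℝ}
  {Ω : Type} [MeasurableSpace Ω] {Pr : Measure Ω}

namespace IsoAux

noncomputable def gker (P : ℕ) {r : ℕ} (K : Fin r → ℕ) (i : Fin r) (s : Finset (Fin P)) : ℝ :=
  if s.card = K i then ((P.choose (K i) : ℝ))⁻¹ else 0

noncomputable def hfac {r : ℕ} (α : Fin r → Fin r → ℝ) (i j : Fin r) (v : Bool) : ℝ :=
  if v then α i j else 1 - α i j

noncomputable def cind {P : ℕ} (s0 s : Finset (Fin P)) (v : Bool) : ℝ :=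
  if (s0 ∩ s).Nonempty ∧ v = true then 0 else 1

noncomputable def Qf {r : ℕ} (α : Fin r → Fin r → ℝ) (i j : Fin r) {P : ℕ}
    (s0 s : Finset (Fin P)) : ℝ :=
  1 - α i j * (if (s0 ∩ s).Nonempty then 1 else 0)

def Bfin (n : ℕ) : Finset (Fin n → Fin n → Bool) :=
  Fintype.piFinset fun x => Fintype.piFinset fun y => if x < y then Finset.univ else {false}

lemma sum_Bfin_prod {n : ℕ} (F : Fin n → Fin n → Bool → ℝ) :
    ∑ b ∈ Bfin n, ∏ x, ∏ y, F x y (b x y)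
      = ∏ x, ∏ y, ∑ v ∈ (if x < y then (Finset.univ : Finset Bool) else {false}), F x y v := by
  symm
  rw [Bfin, ← Finset.prod_univ_sum
    (fun x => Fintype.piFinset fun y => if x < y then (Finset.univ : Finset Bool) else {false})
    (fun x row => ∏ y, F x y (row y))]
  exact Finset.prod_congr rfl fun x _ => Finset.prod_univ_sum _ _

lemma prod_split {M : Type*} [CommMonoid M] {n : ℕ} (z : Fin n) (f : Fin n → M) :
    ∏ x, f x = f z * ∏ y : {y : Fin n // y ≠ z}, f y := by
  rw [← Finset.prod_subtype (Finset.univ.erase z)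
      (fun x => by simp [Finset.mem_erase]) f]
  exact (Finset.mul_prod_erase Finset.univ f (Finset.mem_univ z)).symm

lemma sum_fun_split {S M : Type*} [Fintype S] [AddCommMonoid M] {n : ℕ} (z : Fin n)
    (f : (Fin n → S) → M) (F : S → ({y : Fin n // y ≠ z} → S) → M)
    (hf : ∀ σ : Fin n → S, f σ = F (σ z) (fun y => σ y)) :
    ∑ σ : Fin n → S, f σ = ∑ s0 : S, ∑ g : {y : Fin n // y ≠ z} → S, F s0 g := by
  classical
  rw [← Equiv.sum_comp (Equiv.funSplitAt z S).symm f, Fintype.sum_prod_type]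
  refine Finset.sum_congr rfl fun s0 _ => Finset.sum_congr rfl fun g _ => ?_
  rw [hf]
  have hp := (Equiv.funSplitAt z S).apply_symm_apply (s0, g)
  have h1 : (Equiv.funSplitAt z S).symm (s0, g) z = s0 := congrArg Prod.fst hp
  have h2 : (fun y : {y : Fin n // y ≠ z} => (Equiv.funSplitAt z S).symm (s0, g) y) = g :=
    congrArg Prod.snd hp
  rw [h1, h2]

lemma card_subtype_ne {n : ℕ} (z : Fin n) : Fintype.card {y : Fin n // y ≠ z} = n - 1 := by
  rw [Fintype.card_subtype]
  rw [show Finset.univ.filter (fun y : Fin n => y ≠ z) = Finset.univ.erase z from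
    Finset.filter_ne' _ _]
  rw [Finset.card_erase_of_mem (Finset.mem_univ z), Finset.card_univ, Fintype.card_fin]

lemma card_filter_card {P k : ℕ} :
    (Finset.univ.filter (fun s : Finset (Fin P) => s.card = k)).card = P.choose k := by
  have h : Finset.univ.filter (fun s : Finset (Fin P) => s.card = k)
      = Finset.powersetCard k Finset.univ := by
    ext s; simp [Finset.mem_powersetCard, Finset.subset_univ]
  rw [h, Finset.card_powersetCard]; simp

lemma sum_card_ite {P k : ℕ} (c : ℝ) :
    ∑ s : Finset (Fin P), (if s.card = k then c else 0) = (P.choose k : ℝ) * c := by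
  classical
  rw [← Finset.sum_filter, Finset.sum_const, card_filter_card, nsmul_eq_mul]

lemma filter_disjoint_card {P : ℕ} (s0 : Finset (Fin P)) (kj : ℕ) :
    ((Finset.univ.filter (fun s : Finset (Fin P) => s.card = kj)).filter
        (fun s => ¬(s0 ∩ s).Nonempty)).card = (P - s0.card).choose kj := by
  classical
  have h : (Finset.univ.filter (fun s : Finset (Fin P) => s.card = kj)).filter
        (fun s => ¬(s0 ∩ s).Nonempty) = Finset.powersetCard kj s0ᶜ := by
    ext s
    simp only [Finset.mem_filter, Finset.mem_univ, true_and, Finset.mem_powersetCard,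
      Finset.not_nonempty_iff_eq_empty]
    constructor
    · rintro ⟨h1, h2⟩
      have hd : Disjoint s0 s := Finset.disjoint_iff_inter_eq_empty.2 h2
      exact ⟨fun x hx => Finset.mem_compl.2 fun hx0 => (Finset.disjoint_left.1 hd hx0) hx, h1⟩
    · rintro ⟨h1, h2⟩
      refine ⟨h2, Finset.disjoint_iff_inter_eq_empty.1
        (Finset.disjoint_left.2 fun {x} hx0 hx => ?_)⟩
      exact Finset.mem_compl.1 (h1 hx) hx0
  rw [h, Finset.card_powersetCard, Finset.card_compl, Fintype.card_fin]

lemma count_sum {P r : ℕ} (K : Fin r → ℕ) (α : Fin r → Fin r → ℝ) (i j : Fin r)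
    (hij : K i + K j ≤ P) (s0 : Finset (Fin P)) (hcard : s0.card = K i) :
    ∑ s : Finset (Fin P), gker P K j s * Qf α i j s0 s
      = 1 - α i j * pEdge P K i j := by
  classical
  have hKjP : K j ≤ P := le_trans (Nat.le_add_left _ _) hij
  have hC : (0:ℝ) < (P.choose (K j) : ℝ) := by exact_mod_cast Nat.choose_pos hKjP
  have hsplit : ∀ s : Finset (Fin P), gker P K j s * Qf α i j s0 s
      = (if s.card = K j then ((P.choose (K j) : ℝ))⁻¹ else 0)
        - (if s.card = K j ∧ (s0 ∩ s).Nonempty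
            then ((P.choose (K j) : ℝ))⁻¹ * α i j else 0) := by
    intro s
    unfold gker Qf
    by_cases h1 : s.card = K j <;> by_cases h2 : (s0 ∩ s).Nonempty <;>
      simp [h1, h2] <;> ring
  rw [Finset.sum_congr rfl (fun s _ => hsplit s), Finset.sum_sub_distrib, sum_card_ite]
  have hcc := Finset.card_filter_add_card_filter_not
      (s := Finset.univ.filter (fun s : Finset (Fin P) => s.card = K j))
      (p := fun s => (s0 ∩ s).Nonempty)
  rw [card_filter_card, filter_disjoint_card, hcard] at hcc
  have h2 : ∑ s : Finset (Fin P),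
      (if s.card = K j ∧ (s0 ∩ s).Nonempty then ((P.choose (K j):ℝ))⁻¹ * α i j else 0)
      = ((P.choose (K j) : ℝ) - ((P - K i).choose (K j) : ℝ))
          * (((P.choose (K j):ℝ))⁻¹ * α i j) := by
    rw [← Finset.sum_filter, Finset.sum_const, nsmul_eq_mul]
    congr 1
    have hff : Finset.univ.filter (fun s : Finset (Fin P) => s.card = K j ∧ (s0 ∩ s).Nonempty)
        = (Finset.univ.filter (fun s : Finset (Fin P) => s.card = K j)).filter
            (fun s => (s0 ∩ s).Nonempty) := by
      rw [Finset.filter_filter]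
    rw [hff, ← hcc]
    push_cast
    ring
  rw [h2]
  unfold pEdge
  rw [if_pos hij]
  field_simp

lemma sum_Bfin_hfac {n r : ℕ} (α : Fin r → Fin r → ℝ) (t : Fin n → Fin r) :
    ∑ b ∈ Bfin n, ∏ x : Fin n, ∏ y ∈ Finset.univ.filter (fun y => x < y),
      hfac α (t x) (t y) (b x y) = 1 := by
  have hrw : ∀ b : Fin n → Fin n → Bool,
      (∏ x : Fin n, ∏ y ∈ Finset.univ.filter (fun y => x < y), hfac α (t x) (t y) (b x y))
        = ∏ x, ∏ y, (if x < y then hfac α (t x) (t y) (b x y) else 1) :=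
    fun b => Finset.prod_congr rfl fun x _ => Finset.prod_filter _ _
  rw [Finset.sum_congr rfl fun b _ => hrw b,
    sum_Bfin_prod (fun x y v => if x < y then hfac α (t x) (t y) v else 1)]
  refine Finset.prod_eq_one fun x _ => Finset.prod_eq_one fun y _ => ?_
  by_cases h : x < y
  · simp only [h, if_true]
    rw [Fintype.sum_bool]
    simp [hfac]
  · simp [h]

lemma total_sum {n P r : ℕ} (K : Fin r → ℕ) (μ : Fin r → ℝ) (α : Fin r → Fin r → ℝ)
    (hμsum : ∑ i, μ i = 1) (hKP : ∀ j, K j ≤ P) :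
    ∑ t : Fin n → Fin r, ∑ σ : Fin n → Finset (Fin P), ∑ b ∈ Bfin n,
      ((∏ x, μ (t x)) * (∏ x, gker P K (t x) (σ x)) *
        (∏ x : Fin n, ∏ y ∈ Finset.univ.filter (fun y => x < y),
          hfac α (t x) (t y) (b x y)))
      = 1 := by
  classical
  have hb : ∀ (t : Fin n → Fin r) (σ : Fin n → Finset (Fin P)),
      (∑ b ∈ Bfin n, ((∏ x, μ (t x)) * (∏ x, gker P K (t x) (σ x)) *
        (∏ x : Fin n, ∏ y ∈ Finset.univ.filter (fun y => x < y),
          hfac α (t x) (t y) (b x y))))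
      = (∏ x, μ (t x)) * (∏ x, gker P K (t x) (σ x)) := by
    intro t σ
    rw [← Finset.mul_sum, sum_Bfin_hfac α t, mul_one]
  rw [Finset.sum_congr rfl fun t _ => Finset.sum_congr rfl fun σ _ => hb t σ]
  have hσ : ∀ t : Fin n → Fin r,
      (∑ σ : Fin n → Finset (Fin P), (∏ x, μ (t x)) * (∏ x, gker P K (t x) (σ x)))
      = ∏ x, μ (t x) := by
    intro t
    rw [← Finset.mul_sum]
    rw [show (∑ σ : Fin n → Finset (Fin P), ∏ x, gker P K (t x) (σ x))
        = ∏ x : Fin n, ∑ s : Finset (Fin P), gker P K (t x) s from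
      (Fintype.prod_sum _).symm]
    have h1 : ∀ x : Fin n, (∑ s : Finset (Fin P), gker P K (t x) s) = 1 := by
      intro x
      unfold gker
      rw [sum_card_ite, mul_inv_cancel₀]
      exact_mod_cast (Nat.choose_pos (hKP (t x))).ne'
    rw [Finset.prod_congr rfl fun x _ => h1 x, Finset.prod_const_one, mul_one]
  rw [Finset.sum_congr rfl fun t _ => hσ t]
  rw [show (∑ t : Fin n → Fin r, ∏ x, μ (t x)) = ∏ _x : Fin n, ∑ i, μ i from
    (Fintype.prod_sum _).symm]
  simp [hμsum]

set_option maxHeartbeats 2000000 in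
lemma good_sum {n P r : ℕ} (K : Fin r → ℕ) (μ : Fin r → ℝ) (α : Fin r → Fin r → ℝ)
    (hμsum : ∑ i, μ i = 1) (hK : ∀ i j : Fin r, K i + K j ≤ P) (m : Fin r) (z : Fin n)
    (hz : ∀ y : Fin n, y ≠ z → z < y) :
    ∑ t : Fin n → Fin r, ∑ σ : Fin n → Finset (Fin P), ∑ b ∈ Bfin n,
      (if t z = m ∧ (∀ y : Fin n, y ≠ z → ¬(((σ z) ∩ (σ y)).Nonempty ∧ b z y = true)) then
        ((∏ x, μ (t x)) * (∏ x, gker P K (t x) (σ x)) *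
          (∏ x : Fin n, ∏ y ∈ Finset.univ.filter (fun y => x < y),
            hfac α (t x) (t y) (b x y)))
       else 0)
      = μ m * (1 - LamE μ α P K m) ^ (n - 1) := by
  classical
  have stepA : ∀ (t : Fin n → Fin r) (σ : Fin n → Finset (Fin P)) (b : Fin n → Fin n → Bool),
      (if t z = m ∧ (∀ y : Fin n, y ≠ z → ¬(((σ z) ∩ (σ y)).Nonempty ∧ b z y = true)) then
        ((∏ x, μ (t x)) * (∏ x, gker P K (t x) (σ x)) *
          (∏ x : Fin n, ∏ y ∈ Finset.univ.filter (fun y => x < y),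
            hfac α (t x) (t y) (b x y)))
       else 0)
      = ((if t z = m then (1:ℝ) else 0) * (∏ x, μ (t x)) * (∏ x, gker P K (t x) (σ x))) *
          (∏ x : Fin n, ∏ y : Fin n,
            ((if x = z then (if y = z then (1:ℝ) else cind (σ z) (σ y) (b x y)) else 1) *
             (if x < y then hfac α (t x) (t y) (b x y) else 1))) := by
    intro t σ b
    have e0 : (∏ x : Fin n, ∏ y : Fin n,
          ((if x = z then (if y = z then (1:ℝ) else cind (σ z) (σ y) (b x y)) else 1) *
           (if x < y then hfac α (t x) (t y) (b x y) else 1)))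
        = (∏ x : Fin n, ∏ y : Fin n,
            (if x = z then (if y = z then (1:ℝ) else cind (σ z) (σ y) (b x y)) else 1)) *
          (∏ x : Fin n, ∏ y : Fin n,
            (if x < y then hfac α (t x) (t y) (b x y) else 1)) := by
      rw [← Finset.prod_mul_distrib]
      exact Finset.prod_congr rfl fun x _ => Finset.prod_mul_distrib
    have eA : (∏ x : Fin n, ∏ y : Fin n,
          (if x = z then (if y = z then (1:ℝ) else cind (σ z) (σ y) (b x y)) else 1))
        = ∏ y : Fin n, (if y = z then (1:ℝ) else cind (σ z) (σ y) (b z y)) := by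
      rw [Finset.prod_eq_single_of_mem z (Finset.mem_univ z)
        (fun x _ hx => Finset.prod_eq_one fun y _ => if_neg hx)]
      exact Finset.prod_congr rfl fun y _ => if_pos rfl
    have eB : (∏ x : Fin n, ∏ y : Fin n,
          (if x < y then hfac α (t x) (t y) (b x y) else 1))
        = ∏ x : Fin n, ∏ y ∈ Finset.univ.filter (fun y => x < y),
            hfac α (t x) (t y) (b x y) :=
      Finset.prod_congr rfl fun x _ => (Finset.prod_filter _ _).symm
    have eI : (∏ y : Fin n, (if y = z then (1:ℝ) else cind (σ z) (σ y) (b z y)))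
        = (if (∀ y : Fin n, y ≠ z → ¬(((σ z) ∩ (σ y)).Nonempty ∧ b z y = true))
            then (1:ℝ) else 0) := by
      by_cases hp : ∀ y : Fin n, y ≠ z → ¬(((σ z) ∩ (σ y)).Nonempty ∧ b z y = true)
      · rw [if_pos hp]
        refine Finset.prod_eq_one fun y _ => ?_
        by_cases hy : y = z
        · rw [if_pos hy]
        · rw [if_neg hy]; unfold cind; rw [if_neg (hp y hy)]
      · rw [if_neg hp]
        push_neg at hp
        obtain ⟨y, hy, hcond⟩ := hp
        refine Finset.prod_eq_zero (Finset.mem_univ y) ?_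
        rw [if_neg hy]; unfold cind; rw [if_pos hcond]
    rw [e0, eA, eB, eI]
    by_cases h1 : t z = m <;>
      by_cases h2 : ∀ y : Fin n, y ≠ z → ¬(((σ z) ∩ (σ y)).Nonempty ∧ b z y = true) <;>
      simp [h1, h2] <;> ring
  have stepB : ∀ (t : Fin n → Fin r) (σ : Fin n → Finset (Fin P)),
      (∑ b ∈ Bfin n, ∏ x : Fin n, ∏ y : Fin n,
        ((if x = z then (if y = z then (1:ℝ) else cind (σ z) (σ y) (b x y)) else 1) *
         (if x < y then hfac α (t x) (t y) (b x y) else 1)))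
      = ∏ y : Fin n, (if y = z then (1:ℝ) else Qf α (t z) (t y) (σ z) (σ y)) := by
    intro t σ
    rw [sum_Bfin_prod (fun x y v =>
      (if x = z then (if y = z then (1:ℝ) else cind (σ z) (σ y) v) else 1) *
      (if x < y then hfac α (t x) (t y) v else 1))]
    rw [Finset.prod_eq_single_of_mem z (Finset.mem_univ z) ?side]
    case side =>
      intro x _ hx
      refine Finset.prod_eq_one fun y _ => ?_
      by_cases hxy : x < y
      · simp only [if_neg hx, if_pos hxy, one_mul]
        rw [Fintype.sum_bool]
        unfold hfac; simp
      · simp [hx, hxy]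
    refine Finset.prod_congr rfl fun y _ => ?_
    by_cases hy : y = z
    · have : ¬ z < y := by rw [hy]; exact lt_irrefl z
      simp [hy, this]
    · have hzy : z < y := hz y hy
      simp only [if_pos rfl, if_neg hy, if_pos hzy]
      rw [Fintype.sum_bool]
      unfold cind hfac Qf
      by_cases hne : ((σ z) ∩ (σ y)).Nonempty <;> simp [hne] <;> ring
  have stepC : ∀ t : Fin n → Fin r,
      (∑ σ : Fin n → Finset (Fin P), (∏ x, gker P K (t x) (σ x)) *
        (∏ y : Fin n, (if y = z then (1:ℝ) else Qf α (t z) (t y) (σ z) (σ y))))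
      = ∏ y : {y : Fin n // y ≠ z}, (1 - α (t z) (t y) * pEdge P K (t z) (t y)) := by
    intro t
    have hKz : K (t z) ≤ P := le_trans (Nat.le_add_left _ _) (hK (t z) (t z))
    have hC : ((P.choose (K (t z)) : ℝ)) ≠ 0 := by
      exact_mod_cast (Nat.choose_pos hKz).ne'
    have hf : ∀ σ : Fin n → Finset (Fin P),
        (∏ x, gker P K (t x) (σ x)) *
          (∏ y : Fin n, (if y = z then (1:ℝ) else Qf α (t z) (t y) (σ z) (σ y)))
        = gker P K (t z) (σ z) *
            ∏ y : {y : Fin n // y ≠ z},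
              (gker P K (t (y : Fin n)) (σ (y : Fin n)) *
                Qf α (t z) (t (y : Fin n)) (σ z) (σ (y : Fin n))) := by
      intro σ
      rw [prod_split z (fun x => gker P K (t x) (σ x)),
        prod_split z (fun y => if y = z then (1:ℝ) else Qf α (t z) (t y) (σ z) (σ y)),
        if_pos rfl, one_mul, Finset.prod_mul_distrib]
      rw [Finset.prod_congr rfl (fun (y : {y : Fin n // y ≠ z}) _ => if_neg y.2)]
      ring
    rw [sum_fun_split z _
      (fun s0 g => gker P K (t z) s0 *
        ∏ y : {y : Fin n // y ≠ z},
          (gker P K (t (y : Fin n)) (g y) * Qf α (t z) (t (y : Fin n)) s0 (g y)))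
      hf]
    have hinner : ∀ s0 : Finset (Fin P),
        (∑ g : {y : Fin n // y ≠ z} → Finset (Fin P),
          gker P K (t z) s0 *
            ∏ y : {y : Fin n // y ≠ z}, (gker P K (t y) (g y) * Qf α (t z) (t y) s0 (g y)))
        = (if s0.card = K (t z)
            then ((P.choose (K (t z)) : ℝ))⁻¹ *
              ∏ y : {y : Fin n // y ≠ z}, (1 - α (t z) (t y) * pEdge P K (t z) (t y))
            else 0) := by
      intro s0
      rw [← Finset.mul_sum]
      rw [show (∑ g : {y : Fin n // y ≠ z} → Finset (Fin P),
            ∏ y : {y : Fin n // y ≠ z}, (gker P K (t y) (g y) * Qf α (t z) (t y) s0 (g y)))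
          = ∏ y : {y : Fin n // y ≠ z},
              ∑ s : Finset (Fin P), (gker P K (t y) s * Qf α (t z) (t y) s0 s) from
        (Fintype.prod_sum (fun (y : {y : Fin n // y ≠ z}) (s : Finset (Fin P)) =>
          gker P K (t (y : Fin n)) s * Qf α (t z) (t (y : Fin n)) s0 s)).symm]
      by_cases hc : s0.card = K (t z)
      · rw [if_pos hc]
        unfold gker
        rw [if_pos hc]
        congr 1
        exact Finset.prod_congr rfl fun y _ => count_sum K α (t z) (t y) (hK _ _) s0 hc
      · rw [if_neg hc]
        unfold gker
        rw [if_neg hc, zero_mul]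
    rw [Finset.sum_congr rfl fun s0 _ => hinner s0, sum_card_ite, ← mul_assoc,
      mul_inv_cancel₀ hC, one_mul]
  -- assemble
  rw [Finset.sum_congr rfl fun t _ => Finset.sum_congr rfl fun σ _ => by
    rw [Finset.sum_congr rfl fun b _ => stepA t σ b, ← Finset.mul_sum, stepB t σ]]
  rw [Finset.sum_congr rfl fun t _ => by
    rw [Finset.sum_congr rfl fun σ (_ : σ ∈ Finset.univ) =>
      (by ring :
        ((if t z = m then (1:ℝ) else 0) * (∏ x, μ (t x)) * (∏ x, gker P K (t x) (σ x))) *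
          (∏ y : Fin n, (if y = z then (1:ℝ) else Qf α (t z) (t y) (σ z) (σ y)))
        = ((if t z = m then (1:ℝ) else 0) * (∏ x, μ (t x))) *
            ((∏ x, gker P K (t x) (σ x)) *
             (∏ y : Fin n, (if y = z then (1:ℝ) else Qf α (t z) (t y) (σ z) (σ y))))),
      ← Finset.mul_sum, stepC t]]
  -- now the t-sum
  rw [sum_fun_split z _
    (fun i0 g => ((if i0 = m then (1:ℝ) else 0) * (μ i0 * ∏ y : {y : Fin n // y ≠ z}, μ (g y))) *
      ∏ y : {y : Fin n // y ≠ z}, (1 - α i0 (g y) * pEdge P K i0 (g y)))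
    (fun t => by rw [prod_split z (fun x => μ (t x))])]
  rw [Finset.sum_eq_single_of_mem m (Finset.mem_univ m)
    (fun i0 _ hi0 => Finset.sum_eq_zero fun g _ => by simp [hi0])]
  simp only [eq_self_iff_true, if_true, one_mul]
  rw [Finset.sum_congr rfl (fun g (_ : g ∈ Finset.univ) =>
    (by rw [mul_assoc, ← Finset.prod_mul_distrib] :
      (μ m * ∏ y : {y : Fin n // y ≠ z}, μ (g y)) *
        ∏ y : {y : Fin n // y ≠ z}, (1 - α m (g y) * pEdge P K m (g y))
      = μ m * ∏ y : {y : Fin n // y ≠ z},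
          (μ (g y) * (1 - α m (g y) * pEdge P K m (g y))))), ← Finset.mul_sum]
  rw [show (∑ g : {y : Fin n // y ≠ z} → Fin r, ∏ y : {y : Fin n // y ≠ z},
        (μ (g y) * (1 - α m (g y) * pEdge P K m (g y))))
      = ∏ _y : {y : Fin n // y ≠ z}, ∑ i, (μ i * (1 - α m i * pEdge P K m i)) from
    (Fintype.prod_sum (fun (_y : {y : Fin n // y ≠ z}) (i : Fin r) =>
      μ i * (1 - α m i * pEdge P K m i))).symm]
  have hlam : (∑ i, (μ i * (1 - α m i * pEdge P K m i))) = 1 - LamE μ α P K m := by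
    rw [Finset.sum_congr rfl (fun i (_ : i ∈ Finset.univ) =>
      (by ring : μ i * (1 - α m i * pEdge P K m i)
        = μ i - μ i * (α m i * pEdge P K m i))), Finset.sum_sub_distrib, hμsum]
    rfl
  rw [hlam, Finset.prod_const, Finset.card_univ, card_subtype_ne]

lemma pEdge_mem {P r : ℕ} {K : Fin r → ℕ} (i j : Fin r) (h : K i + K j ≤ P) :
    0 ≤ pEdge P K i j ∧ pEdge P K i j ≤ 1 := by
  have hKjP : K j ≤ P := le_trans (Nat.le_add_left _ _) h
  have hC : (0:ℝ) < (P.choose (K j) : ℝ) := by exact_mod_cast Nat.choose_pos hKjP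
  have hle : ((P - K i).choose (K j) : ℝ) ≤ (P.choose (K j) : ℝ) := by
    exact_mod_cast Nat.choose_le_choose _ (Nat.sub_le _ _)
  have hnn : (0:ℝ) ≤ ((P - K i).choose (K j) : ℝ) := by positivity
  unfold pEdge
  rw [if_pos h]
  constructor
  · have h1 : ((P - K i).choose (K j) : ℝ) / (P.choose (K j) : ℝ) ≤ 1 :=
      (div_le_one hC).2 hle
    linarith
  · have h2 : (0:ℝ) ≤ ((P - K i).choose (K j) : ℝ) / (P.choose (K j) : ℝ) := by positivity
    linarith

lemma LamE_mem {P r : ℕ} {K : Fin r → ℕ} {μ : Fin r → ℝ} {α : Fin r → Fin r → ℝ}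
    (hμpos : ∀ i, 0 < μ i) (hμsum : ∑ i, μ i = 1)
    (hα0 : ∀ i j, 0 < α i j) (hα1 : ∀ i j, α i j < 1)
    (hK : ∀ i j : Fin r, K i + K j ≤ P) (i : Fin r) :
    0 ≤ LamE μ α P K i ∧ LamE μ α P K i ≤ 1 := by
  constructor
  · apply Finset.sum_nonneg
    intro j _
    have hp := pEdge_mem (K := K) i j (hK i j)
    exact mul_nonneg (hμpos j).le (mul_nonneg (hα0 i j).le hp.1)
  · have hle : ∀ j ∈ (Finset.univ : Finset (Fin r)), μ j * (α i j * pEdge P K i j) ≤ μ j := by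
      intro j _
      have hp := pEdge_mem (K := K) i j (hK i j)
      have h0 := (hα0 i j).le
      have h1 := (hα1 i j).le
      have hμ := (hμpos j).le
      have hap : α i j * pEdge P K i j ≤ 1 := by nlinarith [hp.1, hp.2]
      exact mul_le_of_le_one_right hμ hap
    have hs := Finset.sum_le_sum hle
    rw [hμsum] at hs
    exact hs

set_option maxHeartbeats 2000000 in
lemma prob_lower {r n P : ℕ} {K : Fin r → ℕ} {μ : Fin r → ℝ} {α : Fin r → Fin r → ℝ}
    {Ω : Type} [MeasurableSpace Ω] {Pr : Measure Ω} [IsProbabilityMeasure Pr]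
    (M : HetModel r n P K μ α Ω Pr)
    (hμpos : ∀ i, 0 < μ i) (hμsum : ∑ i, μ i = 1)
    (hα0 : ∀ i j, 0 < α i j) (hα1 : ∀ i j, α i j < 1)
    (hK : ∀ i j : Fin r, K i + K j ≤ P)
    (m : Fin r) (z : Fin n) (hz : ∀ y : Fin n, y ≠ z → z < y) :
    ENNReal.ofReal (μ m * (1 - LamE μ α P K m) ^ (n - 1))
      ≤ Pr {ω | M.typ ω z = m ∧ M.Isolated ω z} := by
  classical
  have hKP : ∀ j, K j ≤ P := fun j => le_trans (Nat.le_add_left _ _) (hK j j)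
  have hWnn : ∀ (t : Fin n → Fin r) (σ : Fin n → Finset (Fin P)) (b : Fin n → Fin n → Bool),
      0 ≤ (∏ x, μ (t x)) * (∏ x, gker P K (t x) (σ x)) *
        (∏ x : Fin n, ∏ y ∈ Finset.univ.filter (fun y => x < y),
          hfac α (t x) (t y) (b x y)) := by
    intro t σ b
    refine mul_nonneg (mul_nonneg ?_ ?_) ?_
    · exact Finset.prod_nonneg fun x _ => (hμpos _).le
    · refine Finset.prod_nonneg fun x _ => ?_
      unfold gker
      split
      · positivity
      · exact le_refl 0
    · refine Finset.prod_nonneg fun x _ => Finset.prod_nonneg fun y _ => ?_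
      unfold hfac
      split
      · exact (hα0 _ _).le
      · linarith [hα1 (t x) (t y)]
  have hlam := LamE_mem hμpos hμsum hα0 hα1 hK m
  have h1L0 : (0:ℝ) ≤ 1 - LamE μ α P K m := by linarith [hlam.2]
  have hSg0 : 0 ≤ μ m * (1 - LamE μ α P K m) ^ (n - 1) :=
    mul_nonneg (hμpos m).le (pow_nonneg h1L0 _)
  have hSg1 : μ m * (1 - LamE μ α P K m) ^ (n - 1) ≤ 1 := by
    have hμm1 : μ m ≤ 1 := by
      have h := Finset.single_le_sum (f := μ) (fun i _ => (hμpos i).le) (Finset.mem_univ m)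
      linarith [hμsum ▸ h]
    have hpow : (1 - LamE μ α P K m) ^ (n - 1) ≤ 1 :=
      pow_le_one₀ h1L0 (by linarith [hlam.1])
    nlinarith [pow_nonneg h1L0 (n - 1), (hμpos m).le]
  have hjoint : ∀ (t : Fin n → Fin r) (σ : Fin n → Finset (Fin P)) (b : Fin n → Fin n → Bool),
      Pr {ω | M.typ ω = t ∧ M.keyring ω = σ ∧ ∀ x y : Fin n, x < y → M.chan ω x y = b x y}
        = ENNReal.ofReal ((∏ x, μ (t x)) * (∏ x, gker P K (t x) (σ x)) *
            (∏ x : Fin n, ∏ y ∈ Finset.univ.filter (fun y => x < y),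
              hfac α (t x) (t y) (b x y))) :=
    fun t σ b => M.joint t σ b
  have key : Pr {ω | M.typ ω z = m ∧ M.Isolated ω z}ᶜ
      ≤ ENNReal.ofReal (1 - μ m * (1 - LamE μ α P K m) ^ (n - 1)) := by
    have hcover : {ω | M.typ ω z = m ∧ M.Isolated ω z}ᶜ ⊆
        ⋃ t ∈ (Finset.univ : Finset (Fin n → Fin r)),
          ⋃ σ ∈ (Finset.univ : Finset (Fin n → Finset (Fin P))),
            ⋃ b ∈ Bfin n,
              (if t z = m ∧ (∀ y : Fin n, y ≠ z →
                    ¬(((σ z) ∩ (σ y)).Nonempty ∧ b z y = true))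
               then (∅ : Set Ω)
               else {ω | M.typ ω = t ∧ M.keyring ω = σ ∧
                      ∀ x y : Fin n, x < y → M.chan ω x y = b x y}) := by
      intro ω hω
      have hbmem : (fun x y => if x < y then M.chan ω x y else false) ∈ Bfin n := by
        rw [Bfin, Fintype.mem_piFinset]
        intro x
        rw [Fintype.mem_piFinset]
        intro y
        by_cases h : x < y <;> simp [h]
      have hnp : ¬ (M.typ ω z = m ∧ (∀ y : Fin n, y ≠ z →
          ¬(((M.keyring ω z) ∩ (M.keyring ω y)).Nonempty ∧
            (if z < y then M.chan ω z y else false) = true))) := by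
        intro hp
        apply hω
        refine ⟨hp.1, fun y hAdj => ?_⟩
        obtain ⟨hne, hNE, hch⟩ := hAdj
        have hy : y ≠ z := Ne.symm hne
        have hzy : z < y := hz y hy
        rw [if_pos hzy] at hch
        exact hp.2 y hy ⟨hNE, by rw [if_pos hzy]; exact hch⟩
      refine Set.mem_iUnion₂.mpr ⟨M.typ ω, Finset.mem_univ _,
        Set.mem_iUnion₂.mpr ⟨M.keyring ω, Finset.mem_univ _,
          Set.mem_iUnion₂.mpr ⟨(fun x y => if x < y then M.chan ω x y else false), hbmem, ?_⟩⟩⟩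
      rw [if_neg hnp]
      exact ⟨rfl, rfl, fun x y hxy => (if_pos hxy).symm⟩
    have hPrbad : ∀ (t : Fin n → Fin r) (σ : Fin n → Finset (Fin P)) (b : Fin n → Fin n → Bool),
        Pr (if t z = m ∧ (∀ y : Fin n, y ≠ z →
              ¬(((σ z) ∩ (σ y)).Nonempty ∧ b z y = true))
            then (∅ : Set Ω)
            else {ω | M.typ ω = t ∧ M.keyring ω = σ ∧
                  ∀ x y : Fin n, x < y → M.chan ω x y = b x y})
          ≤ ENNReal.ofReal
              (if t z = m ∧ (∀ y : Fin n, y ≠ z →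
                  ¬(((σ z) ∩ (σ y)).Nonempty ∧ b z y = true))
               then 0
               else (∏ x, μ (t x)) * (∏ x, gker P K (t x) (σ x)) *
                 (∏ x : Fin n, ∏ y ∈ Finset.univ.filter (fun y => x < y),
                   hfac α (t x) (t y) (b x y))) := by
      intro t σ b
      by_cases hp : t z = m ∧ (∀ y : Fin n, y ≠ z →
          ¬(((σ z) ∩ (σ y)).Nonempty ∧ b z y = true))
      · rw [if_pos hp, if_pos hp]
        simp
      · rw [if_neg hp, if_neg hp, hjoint t σ b]
    calc Pr {ω | M.typ ω z = m ∧ M.Isolated ω z}ᶜ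
        ≤ ∑ t : Fin n → Fin r, ∑ σ : Fin n → Finset (Fin P), ∑ b ∈ Bfin n,
            Pr (if t z = m ∧ (∀ y : Fin n, y ≠ z →
                  ¬(((σ z) ∩ (σ y)).Nonempty ∧ b z y = true))
                then (∅ : Set Ω)
                else {ω | M.typ ω = t ∧ M.keyring ω = σ ∧
                      ∀ x y : Fin n, x < y → M.chan ω x y = b x y}) := by
          refine le_trans (measure_mono hcover) ?_
          refine le_trans (measure_biUnion_finset_le _ _)
            (Finset.sum_le_sum fun t _ => ?_)
          refine le_trans (measure_biUnion_finset_le _ _)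
            (Finset.sum_le_sum fun σ _ => ?_)
          exact measure_biUnion_finset_le _ _
      _ ≤ ∑ t : Fin n → Fin r, ∑ σ : Fin n → Finset (Fin P), ∑ b ∈ Bfin n,
            ENNReal.ofReal
              (if t z = m ∧ (∀ y : Fin n, y ≠ z →
                  ¬(((σ z) ∩ (σ y)).Nonempty ∧ b z y = true))
               then 0
               else (∏ x, μ (t x)) * (∏ x, gker P K (t x) (σ x)) *
                 (∏ x : Fin n, ∏ y ∈ Finset.univ.filter (fun y => x < y),
                   hfac α (t x) (t y) (b x y))) := by
          exact Finset.sum_le_sum fun t _ => Finset.sum_le_sum fun σ _ =>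
            Finset.sum_le_sum fun b _ => hPrbad t σ b
      _ = ENNReal.ofReal (∑ t : Fin n → Fin r, ∑ σ : Fin n → Finset (Fin P), ∑ b ∈ Bfin n,
            (if t z = m ∧ (∀ y : Fin n, y ≠ z →
                ¬(((σ z) ∩ (σ y)).Nonempty ∧ b z y = true))
             then 0
             else (∏ x, μ (t x)) * (∏ x, gker P K (t x) (σ x)) *
               (∏ x : Fin n, ∏ y ∈ Finset.univ.filter (fun y => x < y),
                 hfac α (t x) (t y) (b x y)))) := by
          have hnn : ∀ (t : Fin n → Fin r) (σ : Fin n → Finset (Fin P))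
              (b : Fin n → Fin n → Bool), (0:ℝ) ≤
              (if t z = m ∧ (∀ y : Fin n, y ≠ z →
                  ¬(((σ z) ∩ (σ y)).Nonempty ∧ b z y = true))
               then 0
               else (∏ x, μ (t x)) * (∏ x, gker P K (t x) (σ x)) *
                 (∏ x : Fin n, ∏ y ∈ Finset.univ.filter (fun y => x < y),
                   hfac α (t x) (t y) (b x y))) := by
            intro t σ b
            split
            · exact le_refl 0
            · exact hWnn t σ b
          rw [ENNReal.ofReal_sum_of_nonneg (fun t _ =>
            Finset.sum_nonneg fun σ _ => Finset.sum_nonneg fun b _ => hnn t σ b)]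
          refine Finset.sum_congr rfl fun t _ => ?_
          rw [ENNReal.ofReal_sum_of_nonneg (fun σ _ =>
            Finset.sum_nonneg fun b _ => hnn t σ b)]
          refine Finset.sum_congr rfl fun σ _ => ?_
          rw [ENNReal.ofReal_sum_of_nonneg (fun b _ => hnn t σ b)]
      _ = ENNReal.ofReal (1 - μ m * (1 - LamE μ α P K m) ^ (n - 1)) := by
          congr 1
          have esub : ∑ t : Fin n → Fin r, ∑ σ : Fin n → Finset (Fin P), ∑ b ∈ Bfin n,
              (if t z = m ∧ (∀ y : Fin n, y ≠ z →
                  ¬(((σ z) ∩ (σ y)).Nonempty ∧ b z y = true))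
               then 0
               else (∏ x, μ (t x)) * (∏ x, gker P K (t x) (σ x)) *
                 (∏ x : Fin n, ∏ y ∈ Finset.univ.filter (fun y => x < y),
                   hfac α (t x) (t y) (b x y)))
              = (∑ t : Fin n → Fin r, ∑ σ : Fin n → Finset (Fin P), ∑ b ∈ Bfin n,
                  ((∏ x, μ (t x)) * (∏ x, gker P K (t x) (σ x)) *
                    (∏ x : Fin n, ∏ y ∈ Finset.univ.filter (fun y => x < y),
                      hfac α (t x) (t y) (b x y))))
                - (∑ t : Fin n → Fin r, ∑ σ : Fin n → Finset (Fin P), ∑ b ∈ Bfin n,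
                    (if t z = m ∧ (∀ y : Fin n, y ≠ z →
                        ¬(((σ z) ∩ (σ y)).Nonempty ∧ b z y = true))
                     then ((∏ x, μ (t x)) * (∏ x, gker P K (t x) (σ x)) *
                       (∏ x : Fin n, ∏ y ∈ Finset.univ.filter (fun y => x < y),
                         hfac α (t x) (t y) (b x y)))
                     else 0)) := by
            rw [← Finset.sum_sub_distrib]
            refine Finset.sum_congr rfl fun t _ => ?_
            rw [← Finset.sum_sub_distrib]
            refine Finset.sum_congr rfl fun σ _ => ?_
            rw [← Finset.sum_sub_distrib]
            refine Finset.sum_congr rfl fun b _ => ?_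
            by_cases hp : t z = m ∧ (∀ y : Fin n, y ≠ z →
                ¬(((σ z) ∩ (σ y)).Nonempty ∧ b z y = true))
            · rw [if_pos hp, if_pos hp, sub_self]
            · rw [if_neg hp, if_neg hp, sub_zero]
          rw [esub, total_sum K μ α hμsum hKP, good_sum K μ α hμsum hK m z hz]
  have h1 : (1:ENNReal) ≤ Pr {ω | M.typ ω z = m ∧ M.Isolated ω z}
      + Pr {ω | M.typ ω z = m ∧ M.Isolated ω z}ᶜ := by
    rw [← measure_univ (μ := Pr), ← Set.union_compl_self {ω | M.typ ω z = m ∧ M.Isolated ω z}]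
    exact measure_union_le _ _
  calc ENNReal.ofReal (μ m * (1 - LamE μ α P K m) ^ (n - 1))
      = 1 - ENNReal.ofReal (1 - μ m * (1 - LamE μ α P K m) ^ (n - 1)) := by
        rw [← ENNReal.ofReal_one,
          ← ENNReal.ofReal_sub 1 (by linarith : (0:ℝ) ≤ 1 - μ m * (1 - LamE μ α P K m) ^ (n - 1)),
          sub_sub_cancel]
    _ ≤ 1 - Pr {ω | M.typ ω z = m ∧ M.Isolated ω z}ᶜ := tsub_le_tsub_left key 1
    _ ≤ Pr {ω | M.typ ω z = m ∧ M.Isolated ω z} := tsub_le_iff_right.2 h1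

end IsoAux


/-- under any scaling with `Λ_m(n) = c_n log n / n` and
`c_n → c ∈ (0,1)`, with `x_{n,1}` the indicator that vertex `v_1` of
`H(n; μ, Θ_n)` has type `m(n)` and is isolated, `n·E[x_{n,1}] → ∞`;
equivalently, `n·μ_{m(n)}·(1 − Λ_m(n))^{n−1} → ∞`. -/
theorem n_times_expected_indicator_tendsto_top
    (hr : 0 < r)
    (hμpos : ∀ i, 0 < μ i) (hμsum : ∑ i, μ i = 1)
    (Pn : ℕ → ℕ) (Kn : ℕ → Fin r → ℕ)
    (hKpos : ∀ n i, 1 ≤ Kn n i)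
    (hKmono : ∀ n, Monotone (Kn n))
    (hKP : ∀ n i, 2 * Kn n i ≤ Pn n)
    (αn : ℕ → Fin r → Fin r → ℝ)
    (hα0 : ∀ n i j, 0 < αn n i j) (hα1 : ∀ n i j, αn n i j < 1)
    (hαsymm : ∀ n i j, αn n i j = αn n j i)
    (c : ℝ) (hc0 : 0 < c) (hc1 : c < 1) (cn : ℕ → ℝ)
    (hcn : Tendsto cn atTop (nhds c))
    (hscal : ∀ n, 2 ≤ n →
      LamMin μ (αn n) (Pn n) (Kn n) = cn n * Real.log n / n)
    (m : ℕ → Fin r)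
    (hm : ∀ n i, LamE μ (αn n) (Pn n) (Kn n) (m n) ≤ LamE μ (αn n) (Pn n) (Kn n) i)
    (Ω : ℕ → Type) [mΩ : ∀ n, MeasurableSpace (Ω n)]
    (Pr : ∀ n, Measure (Ω n)) (hPr : ∀ n, IsProbabilityMeasure (Pr n))
    (M : ∀ n, HetModel r n (Pn n) (Kn n) μ (αn n) (Ω n) (Pr n)) :
    Tendsto
      (fun (k : ℕ) => if h : 0 < k then
          (k : ENNReal) *
            Pr k {ω | (M k).typ ω (⟨0, h⟩ : Fin k) = m k ∧
                      (M k).Isolated ω (⟨0, h⟩ : Fin k)}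
        else 0)
      atTop (nhds (⊤ : ENNReal)) ∧
    Tendsto
      (fun (k : ℕ) => (k : ℝ) * μ (m k) *
        (1 - LamMin μ (αn k) (Pn k) (Kn k)) ^ (k - 1))
      atTop atTop := by
  classical
  haveI : Nonempty (Fin r) := ⟨⟨0, hr⟩⟩
  have hmin : ∀ k, LamMin μ (αn k) (Pn k) (Kn k) = LamE μ (αn k) (Pn k) (Kn k) (m k) :=
    fun k => le_antisymm (ciInf_le ((Set.finite_range _).bddBelow) (m k)) (le_ciInf (hm k))
  have hKij : ∀ (k : ℕ) (i j : Fin r), Kn k i + Kn k j ≤ Pn k := by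
    intro k i j
    rcases le_total i j with h | h
    · have h1 := hKmono k h
      have h2 := hKP k j
      omega
    · have h1 := hKmono k h
      have h2 := hKP k i
      omega
  have hr' : (Finset.univ : Finset (Fin r)).Nonempty := ⟨⟨0, hr⟩, Finset.mem_univ _⟩
  have hδpos : 0 < Finset.univ.inf' hr' μ := (Finset.lt_inf'_iff hr').2 fun i _ => hμpos i
  have hδle : ∀ i, Finset.univ.inf' hr' μ ≤ μ i := fun i => Finset.inf'_le μ (Finset.mem_univ i)
  have hΛmem : ∀ k, 0 ≤ LamMin μ (αn k) (Pn k) (Kn k) ∧ LamMin μ (αn k) (Pn k) (Kn k) ≤ 1 := by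
    intro k
    rw [hmin k]
    exact IsoAux.LamE_mem hμpos hμsum (hα0 k) (hα1 k) (hKij k) (m k)
  have hΛtend : Tendsto (fun k : ℕ => LamMin μ (αn k) (Pn k) (Kn k)) atTop (nhds 0) := by
    have hlog : Tendsto (fun k : ℕ => Real.log k / k) atTop (nhds 0) :=
      Real.isLittleO_log_id_atTop.tendsto_div_nhds_zero.comp tendsto_natCast_atTop_atTop
    have h1 : Tendsto (fun k : ℕ => cn k * Real.log k / k) atTop (nhds 0) := by
      have h2 := hcn.mul hlog
      rw [mul_zero] at h2
      refine h2.congr fun k => ?_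
      simp [mul_div_assoc]
    refine h1.congr' ?_
    filter_upwards [eventually_ge_atTop 2] with k hk
    exact (hscal k hk).symm
  have hcc' : c < (1 + c) / 2 := by linarith
  have hc'1 : (1 + c) / 2 < 1 := by linarith
  have hev1 : ∀ᶠ k in atTop, LamMin μ (αn k) (Pn k) (Kn k) < 1/2 :=
    hΛtend.eventually_lt_const (by norm_num)
  have hratio : Tendsto (fun k : ℕ => cn k / (1 - LamMin μ (αn k) (Pn k) (Kn k))) atTop (nhds c) := by
    have hd : Tendsto (fun k : ℕ => 1 - LamMin μ (αn k) (Pn k) (Kn k)) atTop (nhds 1) := by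
      simpa using (hΛtend.const_sub 1)
    have h3 := hcn.div hd one_ne_zero
    rw [div_one] at h3
    exact h3
  have hev2 : ∀ᶠ k in atTop, cn k / (1 - LamMin μ (αn k) (Pn k) (Kn k)) < (1 + c) / 2 :=
    hratio.eventually_lt_const hcc'
  have hevbound : ∀ᶠ k : ℕ in atTop,
      (Finset.univ.inf' hr' μ) * Real.exp ((1 - (1 + c) / 2) * Real.log k)
        ≤ (k:ℝ) * μ (m k) * (1 - LamMin μ (αn k) (Pn k) (Kn k)) ^ (k - 1) := by
    filter_upwards [hev1, hev2, eventually_ge_atTop 2] with k h1 h2 hk2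
    have hk1 : (1:ℝ) ≤ (k:ℝ) := by exact_mod_cast le_trans one_le_two hk2
    have hkpos : (0:ℝ) < (k:ℝ) := by linarith
    have hlogk : 0 ≤ Real.log k := Real.log_nonneg hk1
    have hΛk : LamMin μ (αn k) (Pn k) (Kn k) = cn k * Real.log k / k := hscal k hk2
    have hΛnn : 0 ≤ LamMin μ (αn k) (Pn k) (Kn k) := (hΛmem k).1
    have hpos : 0 < 1 - LamMin μ (αn k) (Pn k) (Kn k) := by linarith
    have hexp : Real.exp (-(LamMin μ (αn k) (Pn k) (Kn k) / (1 - LamMin μ (αn k) (Pn k) (Kn k))))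
        ≤ 1 - LamMin μ (αn k) (Pn k) (Kn k) := by
      have h3 : LamMin μ (αn k) (Pn k) (Kn k) / (1 - LamMin μ (αn k) (Pn k) (Kn k)) + 1
          ≤ Real.exp (LamMin μ (αn k) (Pn k) (Kn k) / (1 - LamMin μ (αn k) (Pn k) (Kn k))) :=
        Real.add_one_le_exp _
      have h4 : (1 - LamMin μ (αn k) (Pn k) (Kn k))⁻¹
          = LamMin μ (αn k) (Pn k) (Kn k) / (1 - LamMin μ (αn k) (Pn k) (Kn k)) + 1 := by
        field_simp
        ring
      rw [Real.exp_neg, inv_le_comm₀ (Real.exp_pos _) hpos, h4]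
      exact h3
    have hpow : Real.exp (-(LamMin μ (αn k) (Pn k) (Kn k) / (1 - LamMin μ (αn k) (Pn k) (Kn k)))) ^ (k - 1)
        ≤ (1 - LamMin μ (αn k) (Pn k) (Kn k)) ^ (k - 1) :=
      pow_le_pow_left₀ (Real.exp_pos _).le hexp _
    rw [← Real.exp_nat_mul] at hpow
    have hdiv : 0 ≤ LamMin μ (αn k) (Pn k) (Kn k) / (1 - LamMin μ (αn k) (Pn k) (Kn k)) :=
      div_nonneg hΛnn hpos.le
    have hexparg : ((k - 1 : ℕ) : ℝ) * (LamMin μ (αn k) (Pn k) (Kn k) / (1 - LamMin μ (αn k) (Pn k) (Kn k)))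
        ≤ ((1 + c) / 2) * Real.log k := by
      have hkk : ((k - 1 : ℕ) : ℝ) ≤ (k:ℝ) := by exact_mod_cast Nat.sub_le k 1
      have e1 : ((k - 1 : ℕ) : ℝ) * (LamMin μ (αn k) (Pn k) (Kn k) / (1 - LamMin μ (αn k) (Pn k) (Kn k)))
          ≤ (k:ℝ) * (LamMin μ (αn k) (Pn k) (Kn k) / (1 - LamMin μ (αn k) (Pn k) (Kn k))) :=
        mul_le_mul_of_nonneg_right hkk hdiv
      have e2 : (k:ℝ) * (LamMin μ (αn k) (Pn k) (Kn k) / (1 - LamMin μ (αn k) (Pn k) (Kn k)))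
          = (cn k / (1 - LamMin μ (αn k) (Pn k) (Kn k))) * Real.log k := by
        rw [hΛk]
        field_simp
      have e3 : (cn k / (1 - LamMin μ (αn k) (Pn k) (Kn k))) * Real.log k
          ≤ ((1 + c) / 2) * Real.log k :=
        mul_le_mul_of_nonneg_right h2.le hlogk
      linarith
    have hstep : Real.exp (-(((1 + c) / 2) * Real.log k))
        ≤ (1 - LamMin μ (αn k) (Pn k) (Kn k)) ^ (k - 1) := by
      refine le_trans ?_ hpow
      apply Real.exp_le_exp.2
      have : ((k - 1 : ℕ) : ℝ) * -(LamMin μ (αn k) (Pn k) (Kn k) / (1 - LamMin μ (αn k) (Pn k) (Kn k)))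
          = -(((k - 1 : ℕ) : ℝ) * (LamMin μ (αn k) (Pn k) (Kn k) / (1 - LamMin μ (αn k) (Pn k) (Kn k)))) := by
        ring
      rw [this]
      linarith
    have hA : Real.exp ((1 - (1 + c) / 2) * Real.log k)
        = (k:ℝ) * Real.exp (-(((1 + c) / 2) * Real.log k)) := by
      rw [show (1 - (1 + c) / 2) * Real.log k
          = Real.log k + -(((1 + c) / 2) * Real.log k) by ring, Real.exp_add,
        Real.exp_log hkpos]
    rw [hA]
    calc (Finset.univ.inf' hr' μ) * ((k:ℝ) * Real.exp (-(((1 + c) / 2) * Real.log k)))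
        = (k:ℝ) * ((Finset.univ.inf' hr' μ) * Real.exp (-(((1 + c) / 2) * Real.log k))) := by
          ring
      _ ≤ (k:ℝ) * (μ (m k) * (1 - LamMin μ (αn k) (Pn k) (Kn k)) ^ (k - 1)) := by
          refine mul_le_mul_of_nonneg_left ?_ hkpos.le
          exact mul_le_mul (hδle _) hstep (Real.exp_pos _).le (hμpos _).le
      _ = (k:ℝ) * μ (m k) * (1 - LamMin μ (αn k) (Pn k) (Kn k)) ^ (k - 1) := by ring
  have part2 : Tendsto
      (fun k : ℕ => (k : ℝ) * μ (m k) * (1 - LamMin μ (αn k) (Pn k) (Kn k)) ^ (k - 1))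
      atTop atTop := by
    refine tendsto_atTop_mono' atTop hevbound ?_
    have hl : Tendsto (fun k : ℕ => (1 - (1 + c) / 2) * Real.log k) atTop atTop :=
      Tendsto.const_mul_atTop (by linarith)
        (Real.tendsto_log_atTop.comp tendsto_natCast_atTop_atTop)
    exact Tendsto.const_mul_atTop hδpos (Real.tendsto_exp_atTop.comp hl)
  refine ⟨?_, part2⟩
  have hofty : Tendsto
      (fun k : ℕ => ENNReal.ofReal
        ((k:ℝ) * μ (m k) * (1 - LamMin μ (αn k) (Pn k) (Kn k)) ^ (k - 1)))
      atTop (nhds ⊤) :=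
    ENNReal.tendsto_ofReal_atTop.comp part2
  refine tendsto_nhds_top_mono hofty ?_
  filter_upwards [eventually_ge_atTop 1] with k hk1
  have hk0 : 0 < k := hk1
  rw [dif_pos hk0]
  haveI := hPr k
  have hzk : ∀ y : Fin k, y ≠ (⟨0, hk0⟩ : Fin k) → (⟨0, hk0⟩ : Fin k) < y := by
    intro y hy
    have hy0 : y.val ≠ 0 := fun h0 => hy (Fin.ext h0)
    exact Fin.lt_def.2 (Nat.pos_of_ne_zero hy0)
  have hb := IsoAux.prob_lower (M k) hμpos hμsum (hα0 k) (hα1 k) (hKij k) (m k) ⟨0, hk0⟩ hzk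
  rw [← hmin k] at hb
  calc ENNReal.ofReal ((k:ℝ) * μ (m k) * (1 - LamMin μ (αn k) (Pn k) (Kn k)) ^ (k - 1))
      = (k : ENNReal) * ENNReal.ofReal
          (μ (m k) * (1 - LamMin μ (αn k) (Pn k) (Kn k)) ^ (k - 1)) := by
        rw [mul_assoc, ENNReal.ofReal_mul (by positivity : (0:ℝ) ≤ (k:ℝ)),
          ENNReal.ofReal_natCast]
    _ ≤ (k : ENNReal) * Pr k {ω | (M k).typ ω (⟨0, hk0⟩ : Fin k) = m k ∧
          (M k).Isolated ω (⟨0, hk0⟩ : Fin k)} := mul_le_mul_right hb _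
end
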